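/- arXiv:2209.09581 — 8 statements merged into one kernel-verified Lean document; each statement's English description precedes it below -/
import Mathlib

section
/- Let (ν(i))_{i≥0} be a non-negative decreasing-ratio sequence, i.e., ν(i)/(i+1) is decreasing in i (which holds in particular if ν is decreasing and non-negative). Then for non-negative integers h, h' with 2h ≤ h', one has ∑_{i=2h}^{h'} ν(i) ≤ (∑_{i=h}^{h'} sqrt(ν(i)/(i+1)))^2. -/
theorem stmt1 (ν : ℕ → ℝ) (hnonneg : ∀ i, 0 ≤ ν i)
    (hdec : ∀ i j, j ≤ i → ν i / ((i : ℝ) + 1) ≤ ν j / ((j : ℝ) + 1))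
    (h h' : ℕ) (hh : 2 * h ≤ h') :
    ∑ i ∈ Finset.Icc (2 * h) h', ν i ≤
      (∑ i ∈ Finset.Icc h h', Real.sqrt (ν i / ((i : ℝ) + 1))) ^ 2 := by
  set s : ℕ → ℝ := fun i => Real.sqrt (ν i / ((i : ℝ) + 1)) with hsdef
  have hs0 : ∀ i, 0 ≤ s i := fun i => Real.sqrt_nonneg _
  have hsmono : ∀ i j, j ≤ i → s i ≤ s j := fun i j hij =>
    Real.sqrt_le_sqrt (hdec i j hij)
  have hν : ∀ i, ν i = ((i : ℝ) + 1) * (s i) ^ 2 := by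
    intro i
    have hpos : (0:ℝ) < (i : ℝ) + 1 := by positivity
    have : (s i) ^ 2 = ν i / ((i : ℝ) + 1) :=
      Real.sq_sqrt (div_nonneg (hnonneg i) (by positivity))
    rw [this]
    field_simp
  have hsum : ∀ m, h ≤ m → ((m : ℝ) - h + 1) * s m ≤ ∑ i ∈ Finset.Icc h m, s i := by
    intro m hm
    have hcard := Finset.card_nsmul_le_sum (Finset.Icc h m) s (s m)
      (fun i hi => hsmono m i (Finset.mem_Icc.mp hi).2)
    have hc : (Finset.Icc h m).card = m + 1 - h := Nat.card_Icc h m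
    rw [hc, nsmul_eq_mul] at hcard
    have : ((m + 1 - h : ℕ) : ℝ) = (m : ℝ) - h + 1 := by
      have := Nat.cast_sub (by omega : h ≤ m + 1) (R := ℝ)
      push_cast at this ⊢
      linarith
    rwa [this] at hcard
  induction h', hh using Nat.le_induction with
  | base =>
    have hb := hsum (2 * h) (by omega)
    have hνb := hν (2 * h)
    have h1 : (0:ℝ) ≤ ((2*h : ℕ) : ℝ) - h + 1 := by push_cast; linarith [Nat.cast_nonneg (α := ℝ) h]
    calc ∑ i ∈ Finset.Icc (2*h) (2*h), ν i = ν (2*h) := by simp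
      _ ≤ ((((2*h : ℕ) : ℝ) - h + 1) * s (2*h)) ^ 2 := by
          rw [hνb]
          have := hs0 (2*h)
          push_cast
          nlinarith [Nat.cast_nonneg (α := ℝ) h, sq_nonneg (s (2*h)), sq_nonneg ((h:ℝ) * s (2*h))]
      _ ≤ (∑ i ∈ Finset.Icc h (2*h), s i) ^ 2 := by
          apply pow_le_pow_left₀ (by positivity) hb
  | succ n hn ih =>
    have hhn : h ≤ n := by omega
    rw [Finset.sum_Icc_succ_top (by omega : 2*h ≤ n+1),
        Finset.sum_Icc_succ_top (by omega : h ≤ n+1)]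
    have hS := hsum n hhn
    have hsn : s (n+1) ≤ s n := hsmono (n+1) n (by omega)
    have hν1 := hν (n+1)
    have hs1 := hs0 (n+1)
    have hSn : ((n : ℝ) - h + 1) * s (n+1) ≤ ∑ i ∈ Finset.Icc h n, s i := by
      calc ((n : ℝ) - h + 1) * s (n+1) ≤ ((n : ℝ) - h + 1) * s n := by
            apply mul_le_mul_of_nonneg_left hsn
            have : (h:ℝ) ≤ n := by exact_mod_cast hhn
            linarith
        _ ≤ _ := hS
    have hcast : ((n+1 : ℕ) : ℝ) = (n : ℝ) + 1 := by push_cast; ring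
    have hhcast : (h:ℝ) ≤ (n:ℝ)/2 := by
      have : (2*h : ℕ) ≤ n := hn
      have : ((2*h : ℕ):ℝ) ≤ n := by exact_mod_cast this
      push_cast at this; linarith
    nlinarith [sq_nonneg (s (n+1)), mul_le_mul_of_nonneg_right hSn hs1,
      Finset.sum_nonneg (fun i (_ : i ∈ Finset.Icc h n) => hs0 i)]
end

section
/- Let (ω(i))_{i≥0} be a non-negative sequence with ω(i) ≤ c·e^{-ξ i} for all i ≥ 0, where c > 0 and 0 < ξ ≤ 1. Then ∑_{i=0}^∞ sqrt(ω(i)/(i+1)) ≤ 9·sqrt(c/ξ). -/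
open Real Finset

lemma aux_sum_sqrt (N : ℕ) : ∑ i ∈ Finset.range N, 1 / Real.sqrt (i + 1) ≤ 2 * Real.sqrt N := by
  induction N with
  | zero => simp
  | succ N ih =>
    rw [Finset.sum_range_succ]
    have ha : Real.sqrt N ^ 2 = N := Real.sq_sqrt (by positivity)
    have hb : Real.sqrt (N + 1) ^ 2 = (N : ℝ) + 1 := Real.sq_sqrt (by positivity)
    have hbpos : 0 < Real.sqrt ((N : ℝ) + 1) := Real.sqrt_pos.2 (by positivity)
    have hanneg : 0 ≤ Real.sqrt (N : ℝ) := Real.sqrt_nonneg _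
    have key : 1 / Real.sqrt ((N : ℝ) + 1) ≤ 2 * Real.sqrt ((N : ℝ) + 1) - 2 * Real.sqrt N := by
      rw [div_le_iff₀ hbpos]
      nlinarith [sq_nonneg (Real.sqrt ((N : ℝ) + 1) - Real.sqrt N)]
    have : (↑(N + 1) : ℝ) = (N : ℝ) + 1 := by push_cast; ring
    rw [this]
    calc ∑ i ∈ Finset.range N, 1 / Real.sqrt (i + 1) + 1 / Real.sqrt ((N : ℝ) + 1)
        ≤ 2 * Real.sqrt N + (2 * Real.sqrt ((N : ℝ) + 1) - 2 * Real.sqrt N) := by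
          exact add_le_add ih key
      _ = 2 * Real.sqrt ((N : ℝ) + 1) := by ring

theorem stmt2 (ω : ℕ → ℝ) (c ξ : ℝ) (hc : 0 < c) (hξ : 0 < ξ) (hξ1 : ξ ≤ 1)
    (hnn : ∀ i, 0 ≤ ω i) (hb : ∀ i : ℕ, ω i ≤ c * Real.exp (-ξ * i)) :
    Summable (fun i : ℕ => Real.sqrt (ω i / ((i : ℝ) + 1))) ∧
      ∑' i : ℕ, Real.sqrt (ω i / ((i : ℝ) + 1)) ≤ 9 * Real.sqrt (c / ξ) := by
  set r : ℝ := Real.exp (-(ξ / 2)) with hr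
  have hr0 : 0 ≤ r := (Real.exp_pos _).le
  have hr1 : r < 1 := Real.exp_lt_one_iff.2 (by linarith)
  -- g : dominating sequence without the sqrt c factor
  set g : ℕ → ℝ := fun i => Real.exp (-(ξ / 2) * i) / Real.sqrt (i + 1) with hg
  have hgnn : ∀ i, 0 ≤ g i := fun i => by positivity
  have hg_le_r : ∀ i, g i ≤ r ^ i := by
    intro i
    have h1 : (1 : ℝ) ≤ Real.sqrt (i + 1) :=
      Real.one_le_sqrt.2 (by linarith [Nat.cast_nonneg (α := ℝ) i])
    have h2 : Real.exp (-(ξ / 2) * i) = r ^ i := by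
      rw [hr, ← Real.exp_nat_mul]; ring_nf
    calc g i ≤ Real.exp (-(ξ / 2) * i) / 1 :=
          div_le_div_of_nonneg_left (Real.exp_pos _).le one_pos h1
      _ = r ^ i := by rw [div_one, h2]
  have hgsum : Summable g :=
    Summable.of_nonneg_of_le hgnn hg_le_r (summable_geometric_of_lt_one hr0 hr1)
  -- f ≤ sqrt c * g
  have hfg : ∀ i, Real.sqrt (ω i / ((i : ℝ) + 1)) ≤ Real.sqrt c * g i := by
    intro i
    have hd : (0:ℝ) < (i : ℝ) + 1 := by positivity
    have h1 : ω i / ((i : ℝ) + 1) ≤ c * Real.exp (-ξ * i) / ((i : ℝ) + 1) :=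
      div_le_div_of_nonneg_right (hb i) hd.le
    calc Real.sqrt (ω i / ((i : ℝ) + 1)) ≤ Real.sqrt (c * Real.exp (-ξ * i) / ((i : ℝ) + 1)) :=
          Real.sqrt_le_sqrt h1
      _ = Real.sqrt c * g i := by
          rw [Real.sqrt_div (by positivity), Real.sqrt_mul hc.le, ← Real.exp_half]
          rw [hg]
          congr 2
          ring
  have hfnn : ∀ i, 0 ≤ Real.sqrt (ω i / ((i : ℝ) + 1)) := fun i => Real.sqrt_nonneg _
  have hcgsum : Summable (fun i => Real.sqrt c * g i) := hgsum.mul_left _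
  have hfsum : Summable (fun i : ℕ => Real.sqrt (ω i / ((i : ℝ) + 1))) :=
    Summable.of_nonneg_of_le hfnn hfg hcgsum
  refine ⟨hfsum, ?_⟩
  -- bound on ∑' g
  set N : ℕ := ⌈1 / ξ⌉₊ with hN
  have hNge : 1 / ξ ≤ (N : ℝ) := Nat.le_ceil _
  have hNle : (N : ℝ) ≤ 2 / ξ := by
    have h1 : (1:ℝ) ≤ 1 / ξ := by rw [le_div_iff₀ hξ]; linarith
    have h2 := Nat.ceil_lt_add_one (by positivity : (0:ℝ) ≤ 1 / ξ)
    rw [← hN] at h2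
    have h3 : 2 / ξ = 1 / ξ + 1 / ξ := by ring
    linarith
  -- front part
  have hfront : ∑ i ∈ Finset.range N, g i ≤ 2 * Real.sqrt 2 / Real.sqrt ξ := by
    have h1 : ∑ i ∈ Finset.range N, g i ≤ ∑ i ∈ Finset.range N, 1 / Real.sqrt (i + 1) := by
      apply Finset.sum_le_sum
      intro i _
      have hpos : 0 ≤ (ξ / 2) * i := by positivity
      have : Real.exp (-(ξ / 2) * i) ≤ 1 := Real.exp_le_one_iff.2 (by nlinarith)
      exact div_le_div_of_nonneg_right this (Real.sqrt_nonneg _)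
    have h2 : Real.sqrt (N : ℝ) ≤ Real.sqrt 2 / Real.sqrt ξ := by
      rw [← Real.sqrt_div (by norm_num)]
      exact Real.sqrt_le_sqrt hNle
    calc ∑ i ∈ Finset.range N, g i ≤ 2 * Real.sqrt N := h1.trans (aux_sum_sqrt N)
      _ ≤ 2 * (Real.sqrt 2 / Real.sqrt ξ) := by linarith
      _ = 2 * Real.sqrt 2 / Real.sqrt ξ := by ring
  -- tail part
  have hsξ : 0 < Real.sqrt ξ := Real.sqrt_pos.2 hξ
  have htail_le : ∀ i : ℕ, g (i + N) ≤ Real.sqrt ξ * r ^ i := by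
    intro i
    have h1 : Real.exp (-(ξ / 2) * (i + N : ℕ)) ≤ r ^ i := by
      have : Real.exp (-(ξ / 2) * i) = r ^ i := by rw [hr, ← Real.exp_nat_mul]; ring_nf
      rw [← this]
      apply Real.exp_le_exp.2
      push_cast
      nlinarith [Nat.cast_nonneg (α := ℝ) N, Nat.cast_nonneg (α := ℝ) i]
    have h2 : 1 / Real.sqrt ((i + N : ℕ) + 1) ≤ Real.sqrt ξ := by
      rw [div_le_iff₀ (Real.sqrt_pos.2 (by positivity)), ← Real.sqrt_mul hξ.le]
      have hle : 1 / ξ ≤ ((i + N : ℕ) : ℝ) + 1 := by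
        push_cast
        have := Nat.cast_nonneg (α := ℝ) i
        linarith
      have h1ξ : (1:ℝ) ≤ ξ * (((i + N : ℕ) : ℝ) + 1) := by
        calc (1:ℝ) = ξ * (1 / ξ) := by field_simp
          _ ≤ ξ * (((i + N : ℕ) : ℝ) + 1) := mul_le_mul_of_nonneg_left hle hξ.le
      calc (1:ℝ) = Real.sqrt 1 := by simp
        _ ≤ Real.sqrt (ξ * (((i + N : ℕ) : ℝ) + 1)) := Real.sqrt_le_sqrt h1ξ
    calc g (i + N) = Real.exp (-(ξ / 2) * (i + N : ℕ)) * (1 / Real.sqrt ((i + N : ℕ) + 1)) := by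
          rw [hg]; ring
      _ ≤ r ^ i * Real.sqrt ξ := by
          apply mul_le_mul h1 h2 (by positivity) (by positivity)
      _ = Real.sqrt ξ * r ^ i := by ring
  have hrbound : (1 - r)⁻¹ ≤ 3 / ξ := by
    have h1 : 1 + ξ / 2 ≤ Real.exp (ξ / 2) := by linarith [Real.add_one_le_exp (ξ / 2)]
    have h2 : r ≤ (1 + ξ / 2)⁻¹ := by
      rw [hr, Real.exp_neg]
      exact inv_anti₀ (by linarith) h1
    have h4 : (1 + ξ / 2)⁻¹ ≤ 1 - ξ / 3 := by
      rw [← one_div, div_le_iff₀ (by linarith)]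
      nlinarith
    have h3 : ξ / 3 ≤ 1 - r := by linarith
    have hpos : (0:ℝ) < 1 - r := by linarith
    rw [inv_le_comm₀ hpos (by positivity), inv_div]
    exact h3
  have htail : ∑' i : ℕ, g (i + N) ≤ 3 / Real.sqrt ξ := by
    have hsum2 : Summable (fun i : ℕ => Real.sqrt ξ * r ^ i) :=
      (summable_geometric_of_lt_one hr0 hr1).mul_left _
    calc ∑' i : ℕ, g (i + N) ≤ ∑' i : ℕ, Real.sqrt ξ * r ^ i := by
          apply Summable.tsum_le_tsum htail_le ((summable_nat_add_iff N).2 hgsum) hsum2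
      _ = Real.sqrt ξ * (1 - r)⁻¹ := by
          rw [tsum_mul_left, tsum_geometric_of_lt_one hr0 hr1]
      _ ≤ Real.sqrt ξ * (3 / ξ) := by
          apply mul_le_mul_of_nonneg_left hrbound hsξ.le
      _ = 3 / Real.sqrt ξ := by
          rw [eq_div_iff hsξ.ne', mul_right_comm, Real.mul_self_sqrt hξ.le]
          field_simp
  have hgtsum : ∑' i, g i ≤ 9 / Real.sqrt ξ := by
    have := Summable.sum_add_tsum_nat_add (f := g) N hgsum
    have hs2 : Real.sqrt 2 ≤ (3:ℝ)/2 := by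
      rw [show (3:ℝ)/2 = Real.sqrt ((3/2)^2) from (Real.sqrt_sq (by norm_num)).symm]
      apply Real.sqrt_le_sqrt; norm_num
    calc ∑' i, g i = ∑ i ∈ Finset.range N, g i + ∑' i : ℕ, g (i + N) := this.symm
      _ ≤ 2 * Real.sqrt 2 / Real.sqrt ξ + 3 / Real.sqrt ξ := add_le_add hfront htail
      _ ≤ 2 * (3/2) / Real.sqrt ξ + 3 / Real.sqrt ξ := by
          apply add_le_add_left
          apply div_le_div_of_nonneg_right (by linarith) hsξ.le
      _ ≤ 9 / Real.sqrt ξ := by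
          rw [← add_div, show 2*(3/2)+3 = (6:ℝ) by norm_num]
          apply div_le_div_of_nonneg_right (by norm_num) hsξ.le
  calc ∑' i : ℕ, Real.sqrt (ω i / ((i : ℝ) + 1)) ≤ ∑' i, Real.sqrt c * g i :=
        Summable.tsum_le_tsum hfg hfsum hcgsum
    _ = Real.sqrt c * ∑' i, g i := tsum_mul_left
    _ ≤ Real.sqrt c * (9 / Real.sqrt ξ) := by
        apply mul_le_mul_of_nonneg_left hgtsum (Real.sqrt_nonneg _)
    _ = 9 * Real.sqrt (c / ξ) := by
        rw [Real.sqrt_div hc.le]; ring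
end

section
/- Let (ω(i))_{i≥0} be a non-negative sequence with ω(i) ≤ c·e^{-ξ i} for all i ≥ 0, where c > 0 and 0 < ξ ≤ 1. Then for every j ≥ 0, ∑_{i=j}^∞ sqrt(ω(i)/(i+1)) ≤ 5·sqrt(c)·e^{-ξ j / 2} / ξ. -/
theorem stmt3 (ω : ℕ → ℝ) (c ξ : ℝ) (hc : 0 < c) (hξ : 0 < ξ) (hξ1 : ξ ≤ 1)
    (hnn : ∀ i, 0 ≤ ω i) (hb : ∀ i : ℕ, ω i ≤ c * Real.exp (-ξ * i)) :
    ∀ j : ℕ, Summable (fun i : ℕ => Real.sqrt (ω (j + i) / ((j : ℝ) + (i : ℝ) + 1))) ∧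
      ∑' i : ℕ, Real.sqrt (ω (j + i) / ((j : ℝ) + (i : ℝ) + 1))
        ≤ 5 * Real.sqrt c * Real.exp (-ξ * j / 2) / ξ := by
  intro j
  set r : ℝ := Real.exp (-(ξ / 2)) with hrdef
  have hr0 : 0 < r := Real.exp_pos _
  have hr1 : r < 1 := Real.exp_lt_one_iff.mpr (by linarith)
  -- key gap estimate
  have h1 : ξ / 2 + 1 ≤ Real.exp (ξ / 2) := Real.add_one_le_exp _
  have hmul : r * Real.exp (ξ / 2) = 1 := by
    rw [hrdef, ← Real.exp_add]; simp
  have h2 : r * (ξ / 2 + 1) ≤ 1 := by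
    calc r * (ξ / 2 + 1) ≤ r * Real.exp (ξ / 2) :=
          mul_le_mul_of_nonneg_left h1 hr0.le
      _ = 1 := hmul
  have hgap : ξ / 3 ≤ 1 - r := by nlinarith [sq_nonneg ξ, hr0.le]
  have hgap0 : 0 < 1 - r := by linarith
  -- pointwise bound by a geometric series
  have hrpow : ∀ n : ℕ, r ^ n = Real.exp (-(ξ / 2) * n) := by
    intro n
    rw [hrdef, ← Real.exp_nat_mul]
    ring_nf
  have hterm : ∀ i : ℕ,
      Real.sqrt (ω (j + i) / ((j : ℝ) + (i : ℝ) + 1)) ≤ Real.sqrt c * r ^ j * r ^ i := by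
    intro i
    have hden : (1 : ℝ) ≤ (j : ℝ) + (i : ℝ) + 1 := by
      have hj : (0:ℝ) ≤ j := Nat.cast_nonneg j
      have hi : (0:ℝ) ≤ i := Nat.cast_nonneg i
      linarith
    have h3 : ω (j + i) / ((j : ℝ) + (i : ℝ) + 1) ≤ ω (j + i) :=
      div_le_self (hnn _) hden
    have h4 : ω (j + i) ≤ c * Real.exp (-ξ * (j + i : ℕ)) := hb _
    have h5 : Real.sqrt (ω (j + i) / ((j : ℝ) + (i : ℝ) + 1))
        ≤ Real.sqrt (c * Real.exp (-ξ * (j + i : ℕ))) :=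
      Real.sqrt_le_sqrt (h3.trans h4)
    refine h5.trans_eq ?_
    rw [Real.sqrt_mul hc.le, ← Real.exp_half, mul_assoc, ← pow_add, hrpow]
    congr 1
    push_cast
    ring
  have hnonneg : ∀ i : ℕ, 0 ≤ Real.sqrt (ω (j + i) / ((j : ℝ) + (i : ℝ) + 1)) :=
    fun i => Real.sqrt_nonneg _
  have hsg : Summable (fun i : ℕ => Real.sqrt c * r ^ j * r ^ i) :=
    (summable_geometric_of_lt_one hr0.le hr1).mul_left _
  have hsum : Summable (fun i : ℕ => Real.sqrt (ω (j + i) / ((j : ℝ) + (i : ℝ) + 1))) :=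
    Summable.of_nonneg_of_le hnonneg hterm hsg
  refine ⟨hsum, ?_⟩
  have hle : ∑' i : ℕ, Real.sqrt (ω (j + i) / ((j : ℝ) + (i : ℝ) + 1))
      ≤ ∑' i : ℕ, Real.sqrt c * r ^ j * r ^ i := Summable.tsum_le_tsum hterm hsum hsg
  have hg : ∑' i : ℕ, Real.sqrt c * r ^ j * r ^ i
      = Real.sqrt c * r ^ j * (1 - r)⁻¹ := by
    rw [tsum_mul_left, tsum_geometric_of_lt_one hr0.le hr1]
  refine hle.trans ?_
  rw [hg]
  have hrj : r ^ j = Real.exp (-ξ * j / 2) := by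
    rw [hrpow]; ring_nf
  rw [hrj]
  have hinv : (1 - r)⁻¹ ≤ 5 / ξ := by
    have : (1 - r)⁻¹ ≤ (ξ / 3)⁻¹ := by
      exact inv_anti₀ (by positivity) hgap
    refine this.trans ?_
    rw [inv_div]
    gcongr
    norm_num
  calc Real.sqrt c * Real.exp (-ξ * j / 2) * (1 - r)⁻¹
      ≤ Real.sqrt c * Real.exp (-ξ * j / 2) * (5 / ξ) := by
        apply mul_le_mul_of_nonneg_left hinv (by positivity)
    _ = 5 * Real.sqrt c * Real.exp (-ξ * j / 2) / ξ := by ring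
end

section
/- Let (ω(i))_{i≥0} be non-negative with ω(i) ≤ c·min(e^{-ξ i}, 1/(i+1)) for all i ≥ 0, where c > 0 and 0 < ξ ≤ 1. Then ∑_{i=0}^∞ sqrt(ω(i)/(i+1)) ≤ 14·sqrt(c)·ln(2/ξ). -/
theorem stmt4 (ω : ℕ → ℝ) (c ξ : ℝ) (hc : 0 < c) (hξ : 0 < ξ) (hξ1 : ξ ≤ 1)
    (hnn : ∀ i, 0 ≤ ω i)
    (hb : ∀ i : ℕ, ω i ≤ c * min (Real.exp (-ξ * i)) (1 / ((i : ℝ) + 1))) :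
    Summable (fun i : ℕ => Real.sqrt (ω i / ((i : ℝ) + 1))) ∧
      ∑' i : ℕ, Real.sqrt (ω i / ((i : ℝ) + 1)) ≤ 14 * Real.sqrt c * Real.log (2 / ξ) := by
  set f : ℕ → ℝ := fun i => Real.sqrt (ω i / ((i : ℝ) + 1)) with hf
  have hip : ∀ i : ℕ, (0 : ℝ) < (i : ℝ) + 1 := fun i => by positivity
  have hfnn : ∀ i, 0 ≤ f i := fun i => Real.sqrt_nonneg _
  have hsc : 0 < Real.sqrt c := Real.sqrt_pos.mpr hc
  -- bound A : f i ≤ sqrt c * exp (-ξ i / 2)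
  have hA : ∀ i : ℕ, f i ≤ Real.sqrt c * Real.exp (-(ξ * i) / 2) := by
    intro i
    have h1 : ω i / ((i : ℝ) + 1) ≤ c * Real.exp (-(ξ * i)) := by
      have := (hb i).trans (by
        have : min (Real.exp (-ξ * i)) (1 / ((i : ℝ) + 1)) ≤ Real.exp (-ξ * i) :=
          min_le_left _ _
        exact mul_le_mul_of_nonneg_left this hc.le)
      calc ω i / ((i : ℝ) + 1) ≤ ω i / 1 := by
            apply div_le_div_of_nonneg_left (hnn i) one_pos
            linarith [hip i]
        _ = ω i := by ring
        _ ≤ c * Real.exp (-(ξ * i)) := by rw [neg_mul] at this; exact this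
    calc f i ≤ Real.sqrt (c * Real.exp (-(ξ * i))) := Real.sqrt_le_sqrt h1
      _ = Real.sqrt c * Real.sqrt (Real.exp (-(ξ * i))) := Real.sqrt_mul hc.le _
      _ = Real.sqrt c * Real.exp (-(ξ * i) / 2) := by
          congr 1
          rw [show Real.exp (-(ξ * (i:ℝ))) =
              Real.exp (-(ξ * i) / 2) * Real.exp (-(ξ * i) / 2) by
            rw [← Real.exp_add]; congr 1; ring]
          exact Real.sqrt_mul_self (Real.exp_nonneg _)
  -- bound B : f i ≤ sqrt c / (i+1)
  have hB : ∀ i : ℕ, f i ≤ Real.sqrt c * (1 / ((i : ℝ) + 1)) := by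
    intro i
    have h1 : ω i / ((i : ℝ) + 1) ≤ c * (1 / ((i : ℝ) + 1) * (1 / ((i : ℝ) + 1))) := by
      have h2 : ω i ≤ c * (1 / ((i : ℝ) + 1)) :=
        (hb i).trans (mul_le_mul_of_nonneg_left (min_le_right _ _) hc.le)
      rw [div_le_iff₀ (hip i)]
      have : c * (1 / ((i : ℝ) + 1) * (1 / ((i : ℝ) + 1))) * ((i : ℝ) + 1)
          = c * (1 / ((i : ℝ) + 1)) := by field_simp
      rw [this]; exact h2
    calc f i ≤ Real.sqrt (c * (1 / ((i : ℝ) + 1) * (1 / ((i : ℝ) + 1)))) :=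
          Real.sqrt_le_sqrt h1
      _ = Real.sqrt c * (1 / ((i : ℝ) + 1)) := by
          rw [Real.sqrt_mul hc.le, Real.sqrt_mul_self (by positivity)]
  -- geometric facts
  set r : ℝ := Real.exp (-(ξ / 2)) with hr
  have hr0 : 0 < r := Real.exp_pos _
  have hr1 : r < 1 := Real.exp_lt_one_iff.mpr (by linarith)
  have hrpow : ∀ i : ℕ, Real.exp (-(ξ * i) / 2) = r ^ i := by
    intro i
    rw [hr, ← Real.exp_nat_mul]
    congr 1; push_cast; ring
  have hgeo : Summable (fun i : ℕ => Real.sqrt c * r ^ i) :=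
    (summable_geometric_of_lt_one hr0.le hr1).mul_left _
  have hsum : Summable f := by
    apply Summable.of_nonneg_of_le hfnn _ hgeo
    intro i; rw [← hrpow]; exact hA i
  refine ⟨hsum, ?_⟩
  -- split point
  set N : ℕ := ⌈(4 : ℝ) / ξ ^ 2⌉₊ with hN
  have hNge : (4 : ℝ) / ξ ^ 2 ≤ N := Nat.le_ceil _
  have hN4 : (4 : ℝ) ≤ N := le_trans (by
    rw [le_div_iff₀ (by positivity)]
    nlinarith) hNge
  have hNpos : (0 : ℝ) < N := by linarith
  -- head bound: ∑_{i<N} f i ≤ sqrt c * (1 + log N)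
  have hhead : ∑ i ∈ Finset.range N, f i ≤ Real.sqrt c * (1 + Real.log N) := by
    calc ∑ i ∈ Finset.range N, f i
        ≤ ∑ i ∈ Finset.range N, Real.sqrt c * (1 / ((i : ℝ) + 1)) :=
          Finset.sum_le_sum fun i _ => hB i
      _ = Real.sqrt c * ∑ i ∈ Finset.range N, (1 / ((i : ℝ) + 1)) := by
          rw [Finset.mul_sum]
      _ ≤ Real.sqrt c * (1 + Real.log N) := by
          apply mul_le_mul_of_nonneg_left _ hsc.le
          have : ∑ i ∈ Finset.range N, (1 / ((i : ℝ) + 1)) = (harmonic N : ℝ) := by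
            rw [harmonic]; push_cast; simp [one_div]
          rw [this]
          exact harmonic_le_one_add_log N
  -- tail bound: ∑' i, f (i + N) ≤ 2 * sqrt c
  have hexpN : Real.exp (-(ξ * N) / 2) ≤ ξ / 2 := by
    have h1 : (2 : ℝ) / ξ ≤ ξ * N / 2 := by
      rw [div_le_div_iff₀ hξ (by norm_num)]
      have : (4 : ℝ) / ξ ^ 2 * ξ ^ 2 ≤ (N : ℝ) * ξ ^ 2 := by
        apply mul_le_mul_of_nonneg_right hNge (by positivity)
      rw [div_mul_cancel₀] at this
      · nlinarith
      · positivity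
    have h2 : Real.exp (-(ξ * N) / 2) ≤ Real.exp (-(2 / ξ)) := by
      apply Real.exp_le_exp.mpr; linarith
    refine h2.trans ?_
    rw [Real.exp_neg]
    rw [inv_le_comm₀ (Real.exp_pos _) (by linarith)]
    calc (ξ / 2)⁻¹ = 2 / ξ := by rw [inv_div]
      _ ≤ 2 / ξ + 1 := by linarith
      _ ≤ Real.exp (2 / ξ) := Real.add_one_le_exp _
  have hrinv : (1 - r)⁻¹ ≤ 4 / ξ := by
    have key : r ≤ 1 - ξ / 4 := by
      have he : (1 : ℝ) + ξ / 2 ≤ Real.exp (ξ / 2) := by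
        have := Real.add_one_le_exp (ξ / 2); linarith
      have h1 : r ≤ 1 / (1 + ξ / 2) := by
        rw [le_div_iff₀ (by linarith)]
        calc r * (1 + ξ / 2) ≤ r * Real.exp (ξ / 2) :=
              mul_le_mul_of_nonneg_left he hr0.le
          _ = 1 := by rw [hr, ← Real.exp_add]; simp
      refine h1.trans ?_
      rw [div_le_iff₀ (by positivity)]
      nlinarith
    rw [inv_le_comm₀ (by linarith) (by positivity)]
    calc (4 / ξ)⁻¹ = ξ / 4 := by rw [inv_div]
      _ ≤ 1 - r := by linarith
  have htail : ∑' i : ℕ, f (i + N) ≤ 2 * Real.sqrt c := by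
    have hsum' : Summable (fun i : ℕ => f (i + N)) := hsum.comp_injective (add_left_injective N)
    have hgeo' : Summable (fun i : ℕ => Real.sqrt c * Real.exp (-(ξ * N) / 2) * r ^ i) :=
      (summable_geometric_of_lt_one hr0.le hr1).mul_left _
    have hle : ∀ i : ℕ, f (i + N) ≤ Real.sqrt c * Real.exp (-(ξ * N) / 2) * r ^ i := by
      intro i
      refine (hA (i + N)).trans (le_of_eq ?_)
      rw [mul_assoc, ← hrpow, ← Real.exp_add]
      congr 2
      push_cast; ring
    calc ∑' i : ℕ, f (i + N) ≤ ∑' i : ℕ, Real.sqrt c * Real.exp (-(ξ * N) / 2) * r ^ i :=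
          Summable.tsum_le_tsum hle hsum' hgeo'
      _ = Real.sqrt c * Real.exp (-(ξ * N) / 2) * (1 - r)⁻¹ := by
          rw [tsum_mul_left, tsum_geometric_of_lt_one hr0.le hr1]
      _ ≤ Real.sqrt c * (ξ / 2) * (4 / ξ) := by
          apply mul_le_mul (mul_le_mul_of_nonneg_left hexpN hsc.le) hrinv
            (inv_nonneg.mpr (by linarith)) (by positivity)
      _ = 2 * Real.sqrt c := by field_simp; ring
  -- log facts
  have hlog2 : (0.6931471803 : ℝ) < Real.log 2 := Real.log_two_gt_d9
  have hlogξ : 0 ≤ Real.log (1 / ξ) := Real.log_nonneg (by rw [le_div_iff₀ hξ]; linarith)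
  have hlog2ξ : Real.log (2 / ξ) = Real.log 2 + Real.log (1 / ξ) := by
    rw [← Real.log_mul (by norm_num) (by positivity)]
    congr 1; field_simp
  have hlogN : Real.log N ≤ Real.log 5 + 2 * Real.log (1 / ξ) := by
    have h5 : (N : ℝ) ≤ 5 / ξ ^ 2 := by
      calc (N : ℝ) ≤ 4 / ξ ^ 2 + 1 := by
            have := Nat.ceil_lt_add_one (show (0:ℝ) ≤ 4 / ξ ^ 2 by positivity)
            exact_mod_cast this.le
        _ ≤ 5 / ξ ^ 2 := by
            have hξ2 : ξ ^ 2 ≤ 1 := by nlinarith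
            rw [div_add' _ _ _ (by positivity), div_le_div_iff₀ (by positivity) (by positivity)]
            nlinarith [mul_le_mul_of_nonneg_left hξ2 (sq_nonneg ξ)]
    calc Real.log N ≤ Real.log (5 / ξ ^ 2) := Real.log_le_log hNpos h5
      _ = Real.log 5 + 2 * Real.log (1 / ξ) := by
          rw [show (5 : ℝ) / ξ ^ 2 = 5 * (1 / ξ) ^ 2 by field_simp,
            Real.log_mul (by norm_num) (by positivity), Real.log_pow]
          push_cast; ring
  have hlog5 : Real.log 5 ≤ 4 := by
    have := Real.log_le_sub_one_of_pos (show (0:ℝ) < 5 by norm_num)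
    linarith
  -- combine
  have hsplit : ∑ i ∈ Finset.range N, f i + ∑' i : ℕ, f (i + N) = ∑' i : ℕ, f i :=
    Summable.sum_add_tsum_nat_add N hsum
  have hfinal : ∑' i : ℕ, f i ≤ Real.sqrt c * (3 + Real.log N) := by
    rw [← hsplit]
    calc ∑ i ∈ Finset.range N, f i + ∑' i : ℕ, f (i + N)
        ≤ Real.sqrt c * (1 + Real.log N) + 2 * Real.sqrt c := add_le_add hhead htail
      _ = Real.sqrt c * (3 + Real.log N) := by ring
  refine hfinal.trans ?_
  rw [show 14 * Real.sqrt c * Real.log (2 / ξ) = Real.sqrt c * (14 * Real.log (2 / ξ)) by ring]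
  apply mul_le_mul_of_nonneg_left _ hsc.le
  rw [hlog2ξ]
  nlinarith [hlogN, hlog5, hlog2, hlogξ]
end

section
/- Let (ω(i))_{i≥0} be a non-negative sequence such that for all i ≥ 0, ω(i) ≤ c·ln^δ(i+2)·min(e^{-ξ i}, 1/(i+1)), where δ ≥ 0 and c, ξ are positive constants with ξ ≤ 1. Then ∑_{i=0}^∞ sqrt(ω(i)/(i+1)) ≤ 7·sqrt(c)·ln^{δ/2+1}((δ²+4)/ξ²). -/
open Real Finset

/-- Convexity/Bernoulli: `(p+1) * x^p * (y-x) ≤ y^(p+1) - x^(p+1)` for `0 < x ≤ y`, `0 ≤ p`. -/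
lemma aux_bern {x y p : ℝ} (hx : 0 < x) (hxy : x ≤ y) (hp : 0 ≤ p) :
    (p + 1) * x ^ p * (y - x) ≤ y ^ (p + 1) - x ^ (p + 1) := by
  have hy : 0 < y := hx.trans_le hxy
  have hs : (0:ℝ) ≤ y / x - 1 := by
    rw [sub_nonneg, le_div_iff₀ hx, one_mul]; exact hxy
  have hb := one_add_mul_self_le_rpow_one_add (s := y / x - 1) (by linarith)
    (p := p + 1) (by linarith)
  have h1 : (1 + (p + 1) * (y / x - 1)) * x ^ (p + 1) ≤ y ^ (p + 1) := by
    have h2 := mul_le_mul_of_nonneg_right hb (Real.rpow_nonneg hx.le (p + 1))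
    have h3 : (1 + (y / x - 1)) ^ (p + 1) * x ^ (p + 1) = y ^ (p + 1) := by
      rw [← Real.mul_rpow (by linarith) hx.le]
      congr 1
      field_simp
      ring
    linarith [h2, h3.le, h3.ge]
  have hxq : x ^ (p + 1) = x ^ p * x := Real.rpow_add_one hx.ne' p
  have hexp : (1 + (p + 1) * (y / x - 1)) * x ^ (p + 1)
      = x ^ (p + 1) + (p + 1) * x ^ p * (y - x) := by
    rw [hxq]; field_simp
  linarith [hexp ▸ h1]

set_option maxHeartbeats 4000000 in
theorem stmt5 (ω : ℕ → ℝ) (c ξ δ : ℝ) (hc : 0 < c) (hξ : 0 < ξ) (hξ1 : ξ ≤ 1) (hδ : 0 ≤ δ)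
    (hnn : ∀ i, 0 ≤ ω i)
    (hb : ∀ i : ℕ, ω i ≤ c * Real.log ((i : ℝ) + 2) ^ δ *
        min (Real.exp (-ξ * i)) (1 / ((i : ℝ) + 1))) :
    Summable (fun i : ℕ => Real.sqrt (ω i / ((i : ℝ) + 1))) ∧
      ∑' i : ℕ, Real.sqrt (ω i / ((i : ℝ) + 1))
        ≤ 7 * Real.sqrt c * Real.log ((δ ^ 2 + 4) / ξ ^ 2) ^ (δ / 2 + 1) := by
  set p := δ / 2 with hpdef
  have hp0 : 0 ≤ p := by positivity
  set M := (δ ^ 2 + 4) / ξ ^ 2 with hMdef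
  set L := Real.log ((δ ^ 2 + 4) / ξ ^ 2) with hLdef
  have hξ2 : 0 < ξ ^ 2 := by positivity
  have hξ21 : ξ ^ 2 ≤ 1 := by nlinarith
  have hM4 : (4:ℝ) ≤ M := by
    rw [hMdef, le_div_iff₀ hξ2]; nlinarith [sq_nonneg δ]
  have hMpos : (0:ℝ) < M := by linarith
  have hlog2 : (0.6931471803:ℝ) < Real.log 2 := Real.log_two_gt_d9
  have hlog4 : Real.log 4 = 2 * Real.log 2 := by
    rw [show (4:ℝ) = 2 ^ 2 by norm_num, Real.log_pow]; norm_num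
  have hL138 : (1.386:ℝ) ≤ L := by
    have := Real.log_le_log (by norm_num : (0:ℝ) < 4) hM4
    rw [hlog4] at this; linarith
  have hL1 : (1:ℝ) ≤ L := by linarith
  have hLpos : (0:ℝ) < L := by linarith
  -- the splitting index
  set N := ⌊M⌋₊ with hNdef
  have hN4 : 4 ≤ N := Nat.le_floor (by exact_mod_cast hM4)
  have hNM : (N:ℝ) ≤ M := Nat.floor_le hMpos.le
  have hMN : M < (N:ℝ) + 1 := Nat.lt_floor_add_one M
  set n := N - 2 with hndef
  have hnN : n + 2 = N := by omega
  have hnNr : (n:ℝ) + 2 = (N:ℝ) := by exact_mod_cast congrArg (Nat.cast : ℕ → ℝ) hnN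
  have hnM : M - 3 ≤ (n:ℝ) := by linarith
  set t := fun i : ℕ => Real.sqrt (ω i / ((i : ℝ) + 1)) with htdef
  have ht0 : ∀ i, 0 ≤ t i := fun i => Real.sqrt_nonneg _
  have hsc : 0 ≤ Real.sqrt c := Real.sqrt_nonneg c
  -- bound A, valid for all i
  have hA : ∀ i : ℕ, t i ≤ Real.sqrt c * Real.log ((i:ℝ) + 2) ^ p / ((i:ℝ) + 1) := by
    intro i
    have h1 : (0:ℝ) < (i:ℝ) + 1 := by positivity
    have hlog : (0:ℝ) < Real.log ((i:ℝ) + 2) := Real.log_pos (by push_cast; linarith [Nat.cast_nonneg (α := ℝ) i])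
    have hpp : (Real.log ((i:ℝ) + 2) ^ p) ^ 2 = Real.log ((i:ℝ) + 2) ^ δ := by
      rw [sq, ← Real.rpow_add hlog, hpdef]; ring_nf
    have hbound : ω i / ((i:ℝ) + 1) ≤ (Real.sqrt c * Real.log ((i:ℝ) + 2) ^ p / ((i:ℝ) + 1)) ^ 2 := by
      have h2 : ω i ≤ c * Real.log ((i:ℝ) + 2) ^ δ * (1 / ((i:ℝ) + 1)) := by
        refine (hb i).trans
          (mul_le_mul_of_nonneg_left (min_le_right _ _) (by positivity))
      have h3 : (Real.sqrt c * Real.log ((i:ℝ) + 2) ^ p / ((i:ℝ) + 1)) ^ 2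
          = c * Real.log ((i:ℝ) + 2) ^ δ * (1 / ((i:ℝ) + 1)) / ((i:ℝ) + 1) := by
        rw [div_pow, mul_pow, Real.sq_sqrt hc.le, hpp]
        field_simp
      rw [h3]
      exact div_le_div_of_nonneg_right h2 h1.le
    calc t i = Real.sqrt (ω i / ((i:ℝ) + 1)) := rfl
      _ ≤ Real.sqrt ((Real.sqrt c * Real.log ((i:ℝ) + 2) ^ p / ((i:ℝ) + 1)) ^ 2) :=
          Real.sqrt_le_sqrt hbound
      _ = Real.sqrt c * Real.log ((i:ℝ) + 2) ^ p / ((i:ℝ) + 1) := Real.sqrt_sq (by positivity)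
  -- bound B, valid for all i
  have hB : ∀ i : ℕ, t i ≤ Real.sqrt c * Real.log ((i:ℝ) + 2) ^ p * Real.exp (-(ξ * i) / 2) := by
    intro i
    have h1 : (0:ℝ) < (i:ℝ) + 1 := by positivity
    have hlog : (0:ℝ) < Real.log ((i:ℝ) + 2) := Real.log_pos (by push_cast; linarith [Nat.cast_nonneg (α := ℝ) i])
    have hpp : (Real.log ((i:ℝ) + 2) ^ p) ^ 2 = Real.log ((i:ℝ) + 2) ^ δ := by
      rw [sq, ← Real.rpow_add hlog, hpdef]; ring_nf
    have hbound : ω i / ((i:ℝ) + 1)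
        ≤ (Real.sqrt c * Real.log ((i:ℝ) + 2) ^ p * Real.exp (-(ξ * i) / 2)) ^ 2 := by
      have h2 : ω i ≤ c * Real.log ((i:ℝ) + 2) ^ δ * Real.exp (-ξ * i) := by
        refine (hb i).trans
          (mul_le_mul_of_nonneg_left (min_le_left _ _) (by positivity))
      have h3 : (Real.sqrt c * Real.log ((i:ℝ) + 2) ^ p * Real.exp (-(ξ * i) / 2)) ^ 2
          = c * Real.log ((i:ℝ) + 2) ^ δ * Real.exp (-ξ * i) := by
        rw [mul_pow, mul_pow, Real.sq_sqrt hc.le, hpp, sq, ← Real.exp_add]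
        ring_nf
      rw [h3]
      exact (div_le_self (hnn i) (by linarith)).trans h2
    calc t i = Real.sqrt (ω i / ((i:ℝ) + 1)) := rfl
      _ ≤ Real.sqrt ((Real.sqrt c * Real.log ((i:ℝ) + 2) ^ p * Real.exp (-(ξ * i) / 2)) ^ 2) :=
          Real.sqrt_le_sqrt hbound
      _ = Real.sqrt c * Real.log ((i:ℝ) + 2) ^ p * Real.exp (-(ξ * i) / 2) :=
          Real.sqrt_sq (by positivity)
  -- tail pointwise bound
  have hBtail : ∀ i : ℕ, n ≤ i →
      t i ≤ Real.sqrt c * L ^ p * (Real.exp (ξ * (3 - M) / 4) * Real.exp (-(ξ / 4)) ^ i) := by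
    intro i hi
    have hir : (n:ℝ) ≤ (i:ℝ) := by exact_mod_cast hi
    have hu0 : 0 ≤ (i:ℝ) + 3 - M := by linarith
    have hi2 : (0:ℝ) < (i:ℝ) + 2 := by positivity
    have hlog0 : (0:ℝ) ≤ Real.log ((i:ℝ) + 2) :=
      Real.log_nonneg (by linarith [Nat.cast_nonneg (α := ℝ) i])
    -- step 1 : log (i+2) ≤ L + u/M
    have hstep1 : Real.log ((i:ℝ) + 2) ≤ L + ((i:ℝ) + 3 - M) / M := by
      have h1 : Real.log ((i:ℝ) + 2) - L = Real.log (((i:ℝ) + 2) / M) := by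
        rw [Real.log_div hi2.ne' hMpos.ne']
      have h2 : Real.log (((i:ℝ) + 2) / M) ≤ ((i:ℝ) + 2) / M - 1 :=
        Real.log_le_sub_one_of_pos (by positivity)
      have h3 : ((i:ℝ) + 2) / M - 1 ≤ ((i:ℝ) + 3 - M) / M := by
        rw [sub_div, div_self hMpos.ne']
        have h3a : ((i:ℝ) + 2) / M ≤ ((i:ℝ) + 3) / M := by gcongr <;> linarith
        linarith
      linarith
    -- step 2 : log(i+2)^p ≤ L^p * exp (ξ u / 4)
    have hstep2 : Real.log ((i:ℝ) + 2) ^ p ≤ L ^ p * Real.exp (ξ * ((i:ℝ) + 3 - M) / 4) := by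
      set u := (i:ℝ) + 3 - M with hudef
      have hLu : L + u / M ≤ L * Real.exp (u / (L * M)) := by
        have h4 := Real.add_one_le_exp (u / (L * M))
        have h5 : L + u / M = L * (1 + u / (L * M)) := by
          field_simp
        rw [h5]
        have := mul_le_mul_of_nonneg_left (by linarith : 1 + u / (L * M) ≤ Real.exp (u / (L * M))) hLpos.le
        linarith
      have h6 : Real.log ((i:ℝ) + 2) ^ p ≤ (L * Real.exp (u / (L * M))) ^ p :=
        Real.rpow_le_rpow hlog0 (hstep1.trans hLu) hp0
      have h7 : (L * Real.exp (u / (L * M))) ^ p = L ^ p * Real.exp (u / (L * M) * p) := by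
        rw [Real.mul_rpow hLpos.le (Real.exp_pos _).le, ← Real.exp_mul]
      have h8 : u / (L * M) * p ≤ ξ * u / 4 := by
        rw [div_mul_eq_mul_div, div_le_iff₀ (by positivity)]
        have hkey : 4 * p ≤ ξ * (L * M) := by
          have hξM : ξ * M = (δ ^ 2 + 4) / ξ := by
            rw [hMdef]; field_simp
          have h9 : δ ^ 2 + 4 ≤ (δ ^ 2 + 4) / ξ := by
            rw [le_div_iff₀ hξ]; nlinarith [sq_nonneg δ]
          have h10 : 2 * δ ≤ δ ^ 2 + 4 := by nlinarith [sq_nonneg (δ - 1)]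
          have h11 : ξ * (L * M) = L * (ξ * M) := by ring
          rw [h11, hξM, hpdef]
          calc 4 * (δ / 2) = 2 * δ := by ring
            _ ≤ δ ^ 2 + 4 := h10
            _ ≤ (δ ^ 2 + 4) / ξ := h9
            _ = 1 * ((δ ^ 2 + 4) / ξ) := (one_mul _).symm
            _ ≤ L * ((δ ^ 2 + 4) / ξ) := by
                have : (0:ℝ) ≤ (δ ^ 2 + 4) / ξ := by positivity
                nlinarith
        calc u * p = p * u := by ring
          _ ≤ (ξ * (L * M) / 4) * u := by
              apply mul_le_mul_of_nonneg_right _ hu0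
              linarith
          _ = ξ * u / 4 * (L * M) := by ring
      calc Real.log ((i:ℝ) + 2) ^ p ≤ L ^ p * Real.exp (u / (L * M) * p) := h7 ▸ h6
        _ ≤ L ^ p * Real.exp (ξ * u / 4) := by
            gcongr
      
    -- combine
    have hcomb := hB i
    have hexpid : Real.exp (ξ * ((i:ℝ) + 3 - M) / 4) * Real.exp (-(ξ * i) / 2)
        = Real.exp (ξ * (3 - M) / 4) * Real.exp (-(ξ / 4)) ^ i := by
      rw [← Real.exp_nat_mul, ← Real.exp_add, ← Real.exp_add]
      ring_nf
    calc t i ≤ Real.sqrt c * Real.log ((i:ℝ) + 2) ^ p * Real.exp (-(ξ * i) / 2) := hcomb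
      _ ≤ Real.sqrt c * (L ^ p * Real.exp (ξ * ((i:ℝ) + 3 - M) / 4)) * Real.exp (-(ξ * i) / 2) := by
          apply mul_le_mul_of_nonneg_right _ (Real.exp_pos _).le
          exact mul_le_mul_of_nonneg_left hstep2 hsc
      _ = Real.sqrt c * L ^ p * (Real.exp (ξ * ((i:ℝ) + 3 - M) / 4) * Real.exp (-(ξ * i) / 2)) := by
          ring
      _ = Real.sqrt c * L ^ p * (Real.exp (ξ * (3 - M) / 4) * Real.exp (-(ξ / 4)) ^ i) := by
          rw [hexpid]
  set r := Real.exp (-(ξ / 4)) with hrdef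
  have hr0 : 0 ≤ r := (Real.exp_pos _).le
  have hr1 : r < 1 := Real.exp_lt_one_iff.2 (by linarith)
  set C := Real.sqrt c * L ^ p * Real.exp (ξ * (3 - M) / 4) with hCdef
  have hC0 : 0 ≤ C := by positivity
  have hmaj : Summable (fun i : ℕ => C * r ^ n * r ^ i) :=
    (summable_geometric_of_lt_one hr0 hr1).mul_left _
  have hshift : ∀ i : ℕ, t (i + n) ≤ C * r ^ n * r ^ i := by
    intro i
    have h := hBtail (i + n) (Nat.le_add_left n i)
    calc t (i + n) ≤ Real.sqrt c * L ^ p * (Real.exp (ξ * (3 - M) / 4) * r ^ (i + n)) := h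
      _ = C * r ^ n * r ^ i := by rw [hCdef, pow_add]; ring
  have hsum_shift : Summable (fun i : ℕ => t (i + n)) :=
    Summable.of_nonneg_of_le (fun i => ht0 _) hshift hmaj
  have hsum : Summable t := (summable_nat_add_iff n).1 hsum_shift
  refine ⟨hsum, ?_⟩
  -- head bound
  have hhead : ∑ i ∈ Finset.range n, t i ≤ Real.sqrt c * (3 * L ^ (p + 1)) := by
    set g := fun k : ℕ => Real.log ((k:ℝ) + 2) ^ (p + 1) with hgdef
    have hterm : ∀ k : ℕ, Real.log ((k:ℝ) + 2) ^ p / ((k:ℝ) + 1)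
        ≤ 3 / (p + 1) * (g (k + 1) - g k) := by
      intro k
      have hk0 : (0:ℝ) ≤ (k:ℝ) := Nat.cast_nonneg k
      have hx : (0:ℝ) < Real.log ((k:ℝ) + 2) := Real.log_pos (by linarith)
      have hxy : Real.log ((k:ℝ) + 2) ≤ Real.log ((k:ℝ) + 3) :=
        Real.log_le_log (by linarith) (by linarith)
      have hbern := aux_bern hx hxy hp0
      have hyx : 1 / ((k:ℝ) + 3) ≤ Real.log ((k:ℝ) + 3) - Real.log ((k:ℝ) + 2) := by
        have e1 : Real.log ((k:ℝ) + 3) - Real.log ((k:ℝ) + 2)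
            = - Real.log (((k:ℝ) + 2) / ((k:ℝ) + 3)) := by
          rw [Real.log_div (by linarith) (by linarith)]
          ring
        have e2 : Real.log (((k:ℝ) + 2) / ((k:ℝ) + 3)) ≤ ((k:ℝ) + 2) / ((k:ℝ) + 3) - 1 :=
          Real.log_le_sub_one_of_pos (by positivity)
        have e3 : ((k:ℝ) + 2) / ((k:ℝ) + 3) - 1 = -(1 / ((k:ℝ) + 3)) := by
          field_simp
          norm_num
        rw [e1]
        rw [e3] at e2
        linarith
      have hg1 : g (k + 1) = Real.log ((k:ℝ) + 3) ^ (p + 1) := by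
        have : ((k + 1 : ℕ) : ℝ) + 2 = (k:ℝ) + 3 := by push_cast; ring
        rw [hgdef]; simp only []; rw [this]
      have hg0 : g k = Real.log ((k:ℝ) + 2) ^ (p + 1) := rfl
      rw [hg1, hg0]
      have hq1 : (1:ℝ) ≤ p + 1 := by linarith
      have hxp : (0:ℝ) ≤ Real.log ((k:ℝ) + 2) ^ p := Real.rpow_nonneg hx.le p
      have h1 : Real.log ((k:ℝ) + 2) ^ p / ((k:ℝ) + 1)
          ≤ 3 * Real.log ((k:ℝ) + 2) ^ p * (1 / ((k:ℝ) + 3)) := by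
        rw [div_le_iff₀ (by linarith : (0:ℝ) < (k:ℝ) + 1)]
        have heq : 3 * Real.log ((k:ℝ) + 2) ^ p * (1 / ((k:ℝ) + 3)) * ((k:ℝ) + 1)
            = 3 * Real.log ((k:ℝ) + 2) ^ p * (((k:ℝ) + 1) / ((k:ℝ) + 3)) := by
          ring
        rw [heq]
        have hfrac : (1:ℝ) / 3 ≤ ((k:ℝ) + 1) / ((k:ℝ) + 3) := by
          rw [div_le_div_iff₀ (by norm_num) (by linarith)]
          linarith
        nlinarith [mul_le_mul_of_nonneg_left hfrac
          (by positivity : (0:ℝ) ≤ 3 * Real.log ((k:ℝ) + 2) ^ p)]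
      have h2 : 3 * Real.log ((k:ℝ) + 2) ^ p * (1 / ((k:ℝ) + 3))
          ≤ 3 * Real.log ((k:ℝ) + 2) ^ p * (Real.log ((k:ℝ) + 3) - Real.log ((k:ℝ) + 2)) := by
        apply mul_le_mul_of_nonneg_left hyx (by positivity)
      have h3 : 3 * Real.log ((k:ℝ) + 2) ^ p * (Real.log ((k:ℝ) + 3) - Real.log ((k:ℝ) + 2))
          = 3 / (p + 1) * ((p + 1) * Real.log ((k:ℝ) + 2) ^ p
            * (Real.log ((k:ℝ) + 3) - Real.log ((k:ℝ) + 2))) := by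
        field_simp
      have h4 : 3 / (p + 1) * ((p + 1) * Real.log ((k:ℝ) + 2) ^ p
            * (Real.log ((k:ℝ) + 3) - Real.log ((k:ℝ) + 2)))
          ≤ 3 / (p + 1) * (Real.log ((k:ℝ) + 3) ^ (p + 1) - Real.log ((k:ℝ) + 2) ^ (p + 1)) := by
        apply mul_le_mul_of_nonneg_left hbern (by positivity)
      linarith
    have hgn : g n ≤ L ^ (p + 1) := by
      have hlogn : Real.log ((n:ℝ) + 2) ≤ L := by
        rw [hnNr]
        calc Real.log (N:ℝ) ≤ Real.log M := Real.log_le_log (by positivity) hNM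
          _ = L := rfl
      exact Real.rpow_le_rpow (Real.log_nonneg (by linarith [Nat.cast_nonneg (α := ℝ) n])) hlogn (by linarith)
    have hg00 : (0:ℝ) ≤ g 0 := Real.rpow_nonneg (Real.log_nonneg (by norm_num)) _
    have hgn0 : (0:ℝ) ≤ g n := Real.rpow_nonneg (Real.log_nonneg (by linarith [Nat.cast_nonneg (α := ℝ) n])) _
    calc ∑ i ∈ Finset.range n, t i
        ≤ ∑ i ∈ Finset.range n, Real.sqrt c * (Real.log ((i:ℝ) + 2) ^ p / ((i:ℝ) + 1)) := by
          apply Finset.sum_le_sum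
          intro i _
          have := hA i
          rw [mul_div_assoc] at this
          exact this
      _ = Real.sqrt c * ∑ i ∈ Finset.range n, Real.log ((i:ℝ) + 2) ^ p / ((i:ℝ) + 1) := by
          rw [Finset.mul_sum]
      _ ≤ Real.sqrt c * (3 * L ^ (p + 1)) := by
          apply mul_le_mul_of_nonneg_left _ hsc
          calc ∑ i ∈ Finset.range n, Real.log ((i:ℝ) + 2) ^ p / ((i:ℝ) + 1)
              ≤ ∑ i ∈ Finset.range n, 3 / (p + 1) * (g (i + 1) - g i) :=
                Finset.sum_le_sum fun i _ => hterm i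
            _ = 3 / (p + 1) * (g n - g 0) := by
                rw [← Finset.mul_sum, Finset.sum_range_sub]
            _ ≤ 3 / (p + 1) * g n := by
                apply mul_le_mul_of_nonneg_left (by linarith) (by positivity)
            _ ≤ 3 * L ^ (p + 1) := by
                apply mul_le_mul (by rw [div_le_iff₀ (by linarith)]; nlinarith) hgn hgn0 (by norm_num)
  -- tail bound
  have htail : ∑' i : ℕ, t (i + n) ≤ Real.sqrt c * (4 * L ^ (p + 1)) := by
    have h1 : ∑' i : ℕ, t (i + n) ≤ ∑' i : ℕ, C * r ^ n * r ^ i :=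
      Summable.tsum_le_tsum hshift hsum_shift hmaj
    have h2 : ∑' i : ℕ, C * r ^ n * r ^ i = C * r ^ n * (1 - r)⁻¹ := by
      rw [tsum_mul_left, tsum_geometric_of_lt_one hr0 hr1]
    have hrpos : 0 < 1 - r := by linarith
    have hrn : r ^ n ≤ Real.exp (ξ * (3 - M) / 4) := by
      rw [hrdef, ← Real.exp_nat_mul]
      apply Real.exp_le_exp.2
      nlinarith [mul_le_mul_of_nonneg_left hnM hξ.le]
    have hd : (1:ℝ) / (1 + ξ / 4) ≤ 1 - ξ / 8 := by
      rw [div_le_iff₀ (by linarith)]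
      nlinarith
    have hb2 : r ≤ (1 + ξ / 4)⁻¹ := by
      rw [hrdef, Real.exp_neg]
      exact inv_anti₀ (by linarith) (by linarith [Real.add_one_le_exp (ξ / 4)])
    have hb3 : ξ / 8 ≤ 1 - r := by
      rw [one_div] at hd
      linarith
    have hinv : (1 - r)⁻¹ ≤ 8 / ξ := by
      have h3 : (1 - r)⁻¹ ≤ (ξ / 8)⁻¹ := inv_anti₀ (by positivity) hb3
      have h4 : (ξ / 8)⁻¹ = 8 / ξ := inv_div ξ 8
      linarith
    have hEE : Real.exp (ξ * (3 - M) / 4) * Real.exp (ξ * (3 - M) / 4)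
        ≤ Real.exp (3 / 2) * Real.exp (-(2 / ξ)) := by
      rw [← Real.exp_add, ← Real.exp_add]
      apply Real.exp_le_exp.2
      have hξ2M : ξ ^ 2 * M = δ ^ 2 + 4 := by
        rw [hMdef]; field_simp
      have h2ξ : 2 / ξ ≤ ξ * M / 2 := by
        rw [div_le_iff₀ hξ]
        nlinarith [sq_nonneg δ]
      have e : ξ * (3 - M) / 4 + ξ * (3 - M) / 4 = 3 * ξ / 2 - ξ * M / 2 := by ring
      rw [e]
      linarith
    have hexpξ : Real.exp (-(2 / ξ)) * (8 / ξ) ≤ 8 * Real.exp (-2) := by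
      have hlogξ : 1 - 1 / ξ ≤ Real.log ξ := by
        have h5 := Real.log_le_sub_one_of_pos (show (0:ℝ) < 1 / ξ by positivity)
        rw [Real.log_div one_ne_zero hξ.ne', Real.log_one] at h5
        linarith
      have h1ξ : (1:ℝ) ≤ 1 / ξ := by rw [le_div_iff₀ hξ]; linarith
      have hkey : Real.exp (2 - 2 / ξ) ≤ ξ := by
        calc Real.exp (2 - 2 / ξ) ≤ Real.exp (Real.log ξ) := by
              apply Real.exp_le_exp.2
              have e3 : 2 - 2 / ξ = (1 - 1 / ξ) + (1 - 1 / ξ) := by ring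
              rw [e3]
              linarith
          _ = ξ := Real.exp_log hξ
      have h6 : Real.exp (-(2 / ξ)) ≤ ξ * Real.exp (-2) := by
        have e2 : Real.exp (2 - 2 / ξ) = Real.exp (-(2 / ξ)) * Real.exp 2 := by
          rw [← Real.exp_add]; ring_nf
        rw [e2] at hkey
        calc Real.exp (-(2 / ξ))
            = Real.exp (-(2 / ξ)) * Real.exp 2 * Real.exp (-2) := by
              rw [mul_assoc, ← Real.exp_add]; norm_num
          _ ≤ ξ * Real.exp (-2) := mul_le_mul_of_nonneg_right hkey (Real.exp_pos _).le
      calc Real.exp (-(2 / ξ)) * (8 / ξ) ≤ ξ * Real.exp (-2) * (8 / ξ) :=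
            mul_le_mul_of_nonneg_right h6 (by positivity)
        _ = 8 * Real.exp (-2) := by field_simp
    have hfin2 : 8 * Real.exp (-2) * Real.exp (3 / 2) ≤ 4 * L := by
      have he12 : (3:ℝ) / 2 ≤ Real.exp (1 / 2) := by
        have := Real.add_one_le_exp ((1:ℝ) / 2); linarith
      have heq : 8 * Real.exp (-2) * Real.exp (3 / 2) = 8 * (Real.exp (1 / 2))⁻¹ := by
        rw [mul_assoc, ← Real.exp_add, ← Real.exp_neg]
        norm_num
      rw [heq, mul_inv_le_iff₀ (Real.exp_pos _)]
      nlinarith [Real.exp_pos ((1:ℝ) / 2)]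
    calc ∑' i : ℕ, t (i + n) ≤ C * r ^ n * (1 - r)⁻¹ := le_of_le_of_eq h1 h2
      _ ≤ C * Real.exp (ξ * (3 - M) / 4) * (8 / ξ) := by
          have h7 : C * r ^ n ≤ C * Real.exp (ξ * (3 - M) / 4) :=
            mul_le_mul_of_nonneg_left hrn hC0
          have h8 : 0 ≤ C * r ^ n := by positivity
          calc C * r ^ n * (1 - r)⁻¹ ≤ C * r ^ n * (8 / ξ) :=
                mul_le_mul_of_nonneg_left hinv h8
            _ ≤ C * Real.exp (ξ * (3 - M) / 4) * (8 / ξ) :=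
                mul_le_mul_of_nonneg_right h7 (by positivity)
      _ = Real.sqrt c * L ^ p
          * (Real.exp (ξ * (3 - M) / 4) * Real.exp (ξ * (3 - M) / 4) * (8 / ξ)) := by
          rw [hCdef]; ring
      _ ≤ Real.sqrt c * L ^ p * (Real.exp (3 / 2) * Real.exp (-(2 / ξ)) * (8 / ξ)) := by
          apply mul_le_mul_of_nonneg_left _ (by positivity)
          exact mul_le_mul_of_nonneg_right hEE (by positivity)
      _ = Real.sqrt c * L ^ p * (Real.exp (-(2 / ξ)) * (8 / ξ) * Real.exp (3 / 2)) := by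
          ring
      _ ≤ Real.sqrt c * L ^ p * (8 * Real.exp (-2) * Real.exp (3 / 2)) := by
          apply mul_le_mul_of_nonneg_left _ (by positivity)
          exact mul_le_mul_of_nonneg_right hexpξ (Real.exp_pos _).le
      _ ≤ Real.sqrt c * L ^ p * (4 * L) := by
          apply mul_le_mul_of_nonneg_left hfin2 (by positivity)
      _ = Real.sqrt c * (4 * L ^ (p + 1)) := by
          rw [Real.rpow_add_one hLpos.ne' p]; ring
  have hsplit := Summable.sum_add_tsum_nat_add (f := t) n hsum
  have hfin : (7:ℝ) * Real.sqrt c * L ^ (p + 1)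
      = Real.sqrt c * (3 * L ^ (p + 1)) + Real.sqrt c * (4 * L ^ (p + 1)) := by
    ring
  calc ∑' i : ℕ, t i = ∑ i ∈ Finset.range n, t i + ∑' i : ℕ, t (i + n) := hsplit.symm
    _ ≤ Real.sqrt c * (3 * L ^ (p + 1)) + Real.sqrt c * (4 * L ^ (p + 1)) :=
        add_le_add hhead htail
    _ = 7 * Real.sqrt c * L ^ (p + 1) := hfin.symm
end

section
/- Let X₀ ∈ F and let (Uᵢ)_{i∈ℤ} be i.i.d. random variables with values in F', with g : F × F' → F measurable. Define X_{i,m} := G_{i+m}(X₀; U_{-m},…,U_{i-1}) where G is the iterated application of g. Then for integers n, m, m' with n ≥ -m and n ≥ -m', the pair (X_{n,m}, X_{n,m'}) has the same distribution as (X_{n+m}, X_{n+m, m'-m}), where X_j := X_{j,0}. -/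
open MeasureTheory ProbabilityTheory

/-- Iterated application of the driving map: `iterG g i x u = Gᵢ(x; u₀, …, u_{i-1})`. -/
noncomputable def iterG {F F' : Type*} (g : F → F' → F) : ℕ → F → (ℕ → F') → F
  | 0, x, _ => x
  | i + 1, x, u => g (iterG g i x u) (u i)

lemma iterG_congr {F F' : Type*} (g : F → F' → F) :
    ∀ (i : ℕ) (x : F) (u v : ℕ → F'), (∀ j, j < i → u j = v j) →
      iterG g i x u = iterG g i x v
  | 0, _, _, _, _ => rfl
  | i + 1, x, u, v, h => by
      simp only [iterG]
      rw [iterG_congr g i x u v fun j hj => h j (Nat.lt_succ_of_lt hj),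
        h i (Nat.lt_succ_self i)]

lemma measurable_iterG {F F' : Type*} [MeasurableSpace F] [MeasurableSpace F']
    (g : F → F' → F) (hg : Measurable (Function.uncurry g)) (i : ℕ) (x : F) :
    Measurable fun u : ℕ → F' => iterG g i x u := by
  induction i with
  | zero => exact measurable_const
  | succ i ih =>
      exact hg.comp (ih.prodMk (measurable_pi_apply i))

lemma map_eq_pi_aux {Ω F' : Type*} [MeasurableSpace Ω] [MeasurableSpace F']
    (P : Measure Ω) [IsProbabilityMeasure P]
    (U : ℤ → Ω → F') (hU : ∀ i, Measurable (U i))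
    (hindep : iIndepFun U P)
    (hident : ∀ i, Measure.map (U i) P = Measure.map (U 0) P)
    (K : ℕ) (φ : Fin K → ℤ) (hφ : Function.Injective φ) :
    Measure.map (fun ω (t : Fin K) => U (φ t) ω) P
      = Measure.pi fun _ => Measure.map (U 0) P := by
  classical
  have hνprob : IsProbabilityMeasure (Measure.map (U 0) P) :=
    Measure.isProbabilityMeasure_map (hU 0).aemeasurable
  have hmeas : Measurable fun ω (t : Fin K) => U (φ t) ω :=
    measurable_pi_lambda _ fun t => hU (φ t)
  refine (Measure.pi_eq fun s hs => ?_).symm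
  rw [Measure.map_apply hmeas (MeasurableSet.univ_pi hs)]
  have hpre : (fun ω (t : Fin K) => U (φ t) ω) ⁻¹' Set.pi Set.univ s
      = ⋂ t, U (φ t) ⁻¹' s t := by
    ext ω; simp [Set.mem_pi]
  set sets : ℤ → Set F' := fun i =>
    if h : ∃ t, φ t = i then s (Classical.choose h) else Set.univ with hsets_def
  have hsφ : ∀ t, sets (φ t) = s t := by
    intro t
    have h : ∃ t', φ t' = φ t := ⟨t, rfl⟩
    have := Classical.choose_spec h
    simp only [hsets_def, dif_pos h, hφ this]
  have hsets_meas : ∀ i, MeasurableSet (sets i) := by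
    intro i
    by_cases h : ∃ t, φ t = i
    · simp only [hsets_def, dif_pos h]; exact hs _
    · simp only [hsets_def, dif_neg h]; exact MeasurableSet.univ
  have hind := hindep.measure_inter_preimage_eq_mul (Finset.image φ Finset.univ)
    (sets := sets) (fun i _ => hsets_meas i)
  have hbiInter : (⋂ i ∈ Finset.image φ Finset.univ, U i ⁻¹' sets i)
      = ⋂ t, U (φ t) ⁻¹' s t := by
    rw [Finset.set_biInter_finset_image]
    simp only [hsφ, Finset.mem_univ, Set.iInter_true]
  have hprod : (∏ i ∈ Finset.image φ Finset.univ, P (U i ⁻¹' sets i))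
      = ∏ t : Fin K, P (U (φ t) ⁻¹' s t) := by
    rw [Finset.prod_image fun x _ y _ h => hφ h]
    exact Finset.prod_congr rfl fun t _ => by rw [hsφ]
  have hmarg : ∀ t : Fin K, P (U (φ t) ⁻¹' s t) = Measure.map (U 0) P (s t) := by
    intro t
    rw [← hident (φ t), Measure.map_apply (hU _) (hs t)]
  rw [hpre, ← hbiInter, hind, hprod]
  exact Finset.prod_congr rfl fun t _ => hmarg t

theorem stmt6 {Ω F F' : Type*} [MeasurableSpace Ω] [MeasurableSpace F] [MeasurableSpace F']
    (P : Measure Ω) [IsProbabilityMeasure P]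
    (g : F → F' → F) (hg : Measurable (Function.uncurry g))
    (U : ℤ → Ω → F') (hU : ∀ i, Measurable (U i))
    (hindep : iIndepFun U P)
    (hident : ∀ i, Measure.map (U i) P = Measure.map (U 0) P)
    (x0 : F)
    (X : ℤ → ℤ → Ω → F)
    (hX : ∀ n m ω, X n m ω = iterG g (n + m).toNat x0 (fun j => U ((j : ℤ) - m) ω))
    (n m m' : ℤ) (h1 : -m ≤ n) (h2 : -m' ≤ n) :
    Measure.map (fun ω => (X n m ω, X n m' ω)) P
      = Measure.map (fun ω => (X (n + m) 0 ω, X (n + m) (m' - m) ω)) P := by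
  classical
  set b : ℤ := min (-m) (-m') with hb_def
  have hb1 : b ≤ -m := min_le_left _ _
  have hb2 : b ≤ -m' := min_le_right _ _
  have hbn : b ≤ n := hb1.trans h1
  set K : ℕ := (n - b).toNat with hK_def
  have hKZ : (K : ℤ) = n - b := Int.toNat_of_nonneg (by omega)
  -- clamped index map
  set idx : ℤ → Fin (K + 1) := fun z => ⟨min z.toNat K, by omega⟩ with hidx_def
  set a : ℕ := (n + m).toNat with ha_def
  set a' : ℕ := (n + m').toNat with ha'_def
  have haZ : (a : ℤ) = n + m := Int.toNat_of_nonneg (by omega)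
  have ha'Z : (a' : ℤ) = n + m' := Int.toNat_of_nonneg (by omega)
  set T : (Fin (K + 1) → F') → F × F := fun u =>
    (iterG g a x0 (fun j => u (idx ((j : ℤ) - m - b))),
     iterG g a' x0 (fun j => u (idx ((j : ℤ) - m' - b)))) with hT_def
  have hT_meas : Measurable T := by
    apply Measurable.prod
    · exact (measurable_iterG g hg a x0).comp
        (measurable_pi_lambda _ fun j => measurable_pi_apply _)
    · exact (measurable_iterG g hg a' x0).comp
        (measurable_pi_lambda _ fun j => measurable_pi_apply _)
  have hidx_val : ∀ z : ℤ, 0 ≤ z → z < K → ((idx z : Fin (K + 1)) : ℤ) = z := by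
    intro z h0 hK
    simp only [hidx_def]
    omega
  -- the two injective index maps
  have hinj1 : Function.Injective fun t : Fin (K + 1) => b + (t : ℤ) := by
    intro x y h
    have h' : b + (x : ℤ) = b + (y : ℤ) := h
    exact Fin.ext (by omega)
  have hinj2 : Function.Injective fun t : Fin (K + 1) => b + m + (t : ℤ) := by
    intro x y h
    have h' : b + m + (x : ℤ) = b + m + (y : ℤ) := h
    exact Fin.ext (by omega)
  have hL : (fun ω => (X n m ω, X n m' ω))
      = T ∘ fun ω (t : Fin (K + 1)) => U (b + (t : ℤ)) ω := by
    funext ω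
    simp only [Function.comp_apply, hT_def, hX, Prod.mk.injEq]
    constructor
    · rw [show (n + m).toNat = a from rfl]
      apply iterG_congr
      intro j hj
      have hj' : (j : ℤ) < n + m := by omega
      rw [hidx_val ((j : ℤ) - m - b) (by omega) (by omega)]
      ring_nf
    · rw [show (n + m').toNat = a' from rfl]
      apply iterG_congr
      intro j hj
      have hj' : (j : ℤ) < n + m' := by omega
      rw [hidx_val ((j : ℤ) - m' - b) (by omega) (by omega)]
      ring_nf
  have hR : (fun ω => (X (n + m) 0 ω, X (n + m) (m' - m) ω))
      = T ∘ fun ω (t : Fin (K + 1)) => U (b + m + (t : ℤ)) ω := by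
    funext ω
    simp only [Function.comp_apply, hT_def, hX, Prod.mk.injEq]
    constructor
    · rw [show (n + m + 0).toNat = a by simp [ha_def]]
      apply iterG_congr
      intro j hj
      have hj' : (j : ℤ) < n + m := by omega
      rw [hidx_val ((j : ℤ) - m - b) (by omega) (by omega)]
      congr 1
      ring
    · rw [show (n + m + (m' - m)).toNat = a' by rw [ha'_def]; congr 1; ring]
      apply iterG_congr
      intro j hj
      have hj' : (j : ℤ) < n + m' := by omega
      rw [hidx_val ((j : ℤ) - m' - b) (by omega) (by omega)]
      congr 1
      ring
  have hfam1 : Measurable fun ω (t : Fin (K + 1)) => U (b + (t : ℤ)) ω :=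
    measurable_pi_lambda _ fun t => hU _
  have hfam2 : Measurable fun ω (t : Fin (K + 1)) => U (b + m + (t : ℤ)) ω :=
    measurable_pi_lambda _ fun t => hU _
  rw [hL, hR, ← Measure.map_map hT_meas hfam1, ← Measure.map_map hT_meas hfam2,
    map_eq_pi_aux P U hU hindep hident (K + 1) _ hinj1,
    map_eq_pi_aux P U hU hindep hident (K + 1) _ hinj2]
end

section
/- Under Assumption A1, for all h ≥ 0 and k > 0, the absolute bias of the time-average satisfies |E[(1/k)∑_{i=h}^{h+k-1} f(Xᵢ)] − μ| ≤ ν̄(⌊h/2⌋)/sqrt(k), where ν̄(j) := ∑_{i=j}^∞ sqrt(ν(i)/(i+1)) and μ := lim_h E[f(X_h)]. -/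
open MeasureTheory ProbabilityTheory

section Aux

lemma sqrt_telescope_aux (a b : ℕ) (hab : a ≤ b) :
    2 * (Real.sqrt (b + 1) - Real.sqrt (a + 1)) ≤ ∑ i ∈ Finset.Ico a b, 1 / Real.sqrt (i + 1) := by
  induction b with
  | zero =>
    interval_cases a
    simp
  | succ b ih =>
    rcases Nat.lt_or_ge a (b + 1) with hlt | hge
    · have hab' : a ≤ b := by omega
      rw [Finset.sum_Ico_succ_top hab']
      have key : 2 * (Real.sqrt (b + 1 + 1) - Real.sqrt (b + 1)) ≤ 1 / Real.sqrt (b + 1) := by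
        have h1 : (0:ℝ) < Real.sqrt (b + 1) := Real.sqrt_pos.mpr (by positivity)
        have h2 : (0:ℝ) < Real.sqrt (b + 1 + 1) := Real.sqrt_pos.mpr (by positivity)
        have e1 : Real.sqrt (b+1+1) ^ 2 = (b:ℝ)+1+1 := Real.sq_sqrt (by positivity)
        have e2 : Real.sqrt (b+1) ^ 2 = (b:ℝ)+1 := Real.sq_sqrt (by positivity)
        have h3 : Real.sqrt (b+1) ≤ Real.sqrt (b+1+1) := Real.sqrt_le_sqrt (by linarith)
        rw [le_div_iff₀ h1]
        nlinarith [sq_nonneg (Real.sqrt (b+1+1) - Real.sqrt (b+1))]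
      have := ih hab'
      push_cast at *
      linarith
    · have : a = b + 1 := by omega
      subst this
      simp

lemma numeric_core_aux (n : ℕ) :
    4 * Real.sqrt ((n / 2 : ℕ) + 1) * Real.sqrt (n + 1) ≤ 3 * (n:ℝ) + 4 := by
  have h1 : 4 * Real.sqrt ((n / 2 : ℕ) + 1) * Real.sqrt (n + 1)
      = 4 * Real.sqrt (((n / 2 : ℕ) + 1) * (n + 1)) := by
    rw [Real.sqrt_mul (by positivity)]
    ring
  rw [h1]
  have h2 : Real.sqrt (((n / 2 : ℕ) + 1) * ((n:ℝ) + 1)) ≤ ((3 * (n:ℝ) + 4) / 4) := by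
    rw [show ((3 * (n:ℝ) + 4) / 4) = Real.sqrt (((3 * (n:ℝ) + 4) / 4) ^ 2) from
      (Real.sqrt_sq (by positivity)).symm]
    apply Real.sqrt_le_sqrt
    have hfl : ((n / 2 : ℕ) : ℝ) ≤ (n : ℝ) / 2 := by
      exact_mod_cast Nat.cast_div_le
    nlinarith [Nat.cast_nonneg (α := ℝ) n]
  linarith

lemma step_ineq_aux (ν : ℕ → ℝ) (hpos : ∀ i, 0 < ν i) (hdec : Antitone ν) (j n : ℕ)
    (hjn : 2 * j ≤ n) :
    (∑ i ∈ Finset.Ico j n, Real.sqrt (ν i / (i + 1))) ^ 2 + ν n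
      ≤ (∑ i ∈ Finset.Ico j (n+1), Real.sqrt (ν i / (i + 1))) ^ 2 := by
  set b : ℕ → ℝ := fun i => Real.sqrt (ν i / (i + 1)) with hb
  have hbnn : ∀ i, 0 ≤ b i := fun i => Real.sqrt_nonneg _
  have hjn' : j ≤ n := by omega
  rw [Finset.sum_Ico_succ_top hjn']
  set S := ∑ i ∈ Finset.Ico j n, b i with hS
  have hSnn : 0 ≤ S := Finset.sum_nonneg fun i _ => hbnn i
  set s1 := Real.sqrt (ν n) with hs1
  set t := Real.sqrt ((n:ℝ) + 1) with ht
  set u := Real.sqrt (((n/2 : ℕ):ℝ) + 1) with hu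
  have hsq : s1 ^ 2 = ν n := Real.sq_sqrt (hpos n).le
  have hsqn1 : t ^ 2 = (n:ℝ)+1 := Real.sq_sqrt (by positivity)
  have htpos : (0:ℝ) < t := Real.sqrt_pos.mpr (by positivity)
  have hunn : (0:ℝ) ≤ u := Real.sqrt_nonneg _
  have hvnn : (0:ℝ) ≤ s1 := Real.sqrt_nonneg _
  have hnum : 4 * u * t ≤ 3 * (n:ℝ) + 4 := numeric_core_aux n
  have hsub : Finset.Ico (n/2) n ⊆ Finset.Ico j n :=
    Finset.Ico_subset_Ico (by omega) le_rfl
  have hS1 : s1 * ∑ i ∈ Finset.Ico (n/2) n, 1 / Real.sqrt (i+1) ≤ S := by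
    rw [Finset.mul_sum]
    refine le_trans (Finset.sum_le_sum (fun i hi => ?_))
      (Finset.sum_le_sum_of_subset_of_nonneg hsub fun i _ _ => hbnn i)
    rw [Finset.mem_Ico] at hi
    have hbi : b i = Real.sqrt (ν i) / Real.sqrt (i+1) := by
      rw [hb]; exact Real.sqrt_div (hpos i).le _
    rw [hbi, mul_one_div, div_le_div_iff₀ (by positivity) (by positivity)]
    have : s1 ≤ Real.sqrt (ν i) := Real.sqrt_le_sqrt (hdec hi.2.le)
    nlinarith [Real.sqrt_nonneg (ν i), Real.sqrt_pos.mpr (show (0:ℝ) < (i:ℝ)+1 by positivity)]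
  have htel := sqrt_telescope_aux (n/2) n (by omega)
  have hS2 : s1 * (2 * (t - u)) ≤ S :=
    le_trans (mul_le_mul_of_nonneg_left htel hvnn) hS1
  have k1 : 2*s1*t*(s1 * (2 * (t - u))) ≤ 2*s1*t*S :=
    mul_le_mul_of_nonneg_left hS2 (by positivity)
  have k2 : 4 * ν n * (u * t) ≤ ν n * (3*(n:ℝ)+4) := by
    nlinarith [(hpos n).le]
  have key : (n:ℝ) * ν n ≤ 2*S*s1*t := by nlinarith [k1, k2]
  have hbn : b n = s1 / t := by rw [hb, hs1, ht]; exact Real.sqrt_div (hpos n).le _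
  have hbn2 : b n ^ 2 = ν n / ((n:ℝ) + 1) :=
    Real.sq_sqrt (div_nonneg (hpos n).le (by positivity))
  have hfr : s1 / t = s1 * t / ((n:ℝ)+1) := by
    rw [← hsqn1]
    field_simp
  have hdiv : (n:ℝ) * ν n / ((n:ℝ)+1) ≤ 2*S*s1*t / ((n:ℝ)+1) := by
    gcongr
  have expand : (S + b n)^2 = S^2 + 2*S*(b n) + b n^2 := by ring
  rw [expand, hbn2, hbn, hfr]
  have hid : ν n = (n:ℝ)*ν n/((n:ℝ)+1) + ν n/((n:ℝ)+1) := by field_simp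
  have hr2 : 2*S*(s1*t/((n:ℝ)+1)) = 2*S*s1*t/((n:ℝ)+1) := by ring
  linarith [hdiv]

lemma tail_sum_aux (ν : ℕ → ℝ) (hpos : ∀ i, 0 < ν i) (hdec : Antitone ν) (j N : ℕ) :
    ∑ n ∈ Finset.Ico (2*j) N, ν n
      ≤ (∑ i ∈ Finset.Ico j N, Real.sqrt (ν i / (i + 1))) ^ 2 := by
  induction N with
  | zero => simp [sq_nonneg]
  | succ N ih =>
    rcases Nat.lt_or_ge N (2*j) with hlt | hge
    · rw [Finset.Ico_eq_empty (by omega)]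
      simp [sq_nonneg]
    · rw [Finset.sum_Ico_succ_top (by omega : 2*j ≤ N)]
      calc ∑ n ∈ Finset.Ico (2*j) N, ν n + ν N
          ≤ (∑ i ∈ Finset.Ico j N, Real.sqrt (ν i / (i + 1))) ^ 2 + ν N := by linarith [ih]
        _ ≤ (∑ i ∈ Finset.Ico j (N+1), Real.sqrt (ν i / (i + 1))) ^ 2 :=
            step_ineq_aux ν hpos hdec j N hge

lemma partial_le_tail_aux (ν : ℕ → ℝ)
    (hsum : Summable (fun i : ℕ => Real.sqrt (ν i / ((i : ℝ) + 1)))) (j N : ℕ) :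
    ∑ i ∈ Finset.Ico j N, Real.sqrt (ν i / (i + 1))
      ≤ ∑' i : ℕ, Real.sqrt (ν (j + i) / ((j : ℝ) + (i : ℝ) + 1)) := by
  have hre : ∀ i : ℕ, Real.sqrt (ν (j + i) / ((j : ℝ) + (i : ℝ) + 1))
      = Real.sqrt (ν (j + i) / (((j + i : ℕ) : ℝ) + 1)) := by
    intro i; push_cast; ring_nf
  have hsum2 : Summable (fun i : ℕ => Real.sqrt (ν (j + i) / (((j + i : ℕ):ℝ) + 1))) := by
    have := (summable_nat_add_iff (f := fun i : ℕ => Real.sqrt (ν i / ((i:ℝ) + 1))) j).mpr hsum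
    simpa [add_comm] using this
  rw [Finset.sum_Ico_eq_sum_range]
  calc ∑ i ∈ Finset.range (N - j), Real.sqrt (ν (j + i) / (((j + i : ℕ):ℝ) + 1))
      ≤ ∑' i : ℕ, Real.sqrt (ν (j + i) / (((j + i : ℕ):ℝ) + 1)) :=
        Summable.sum_le_tsum _ (fun i _ => Real.sqrt_nonneg _) hsum2
    _ = ∑' i : ℕ, Real.sqrt (ν (j + i) / ((j : ℝ) + (i : ℝ) + 1)) :=
        tsum_congr fun i => (hre i).symm

lemma iterG_congr_aux {F F' : Type*} (g : F → F' → F) (n : ℕ) (x : F) {u v : ℕ → F'}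
    (h : ∀ j < n, u j = v j) : iterG g n x u = iterG g n x v := by
  induction n with
  | zero => rfl
  | succ n ih =>
    show g (iterG g n x u) (u n) = g (iterG g n x v) (v n)
    rw [ih (fun j hj => h j (Nat.lt_succ_of_lt hj)), h n (Nat.lt_succ_self n)]

lemma measurable_iterG_aux {F F' : Type*} [MeasurableSpace F] [MeasurableSpace F']
    (g : F → F' → F) (hg : Measurable (Function.uncurry g)) (n : ℕ) (x : F) :
    Measurable (fun u : ℕ → F' => iterG g n x u) := by
  induction n with
  | zero => exact measurable_const
  | succ n ih =>
    show Measurable fun u : ℕ → F' => g (iterG g n x u) (u n)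
    exact hg.comp (ih.prodMk (measurable_pi_apply n))

lemma law_pi_aux {Ω F' : Type*} [MeasurableSpace Ω] [MeasurableSpace F']
    (P : Measure Ω) [IsProbabilityMeasure P]
    (U : ℤ → Ω → F') (hU : ∀ i, Measurable (U i))
    (hindep : iIndepFun U P)
    (hident : ∀ i, Measure.map (U i) P = Measure.map (U 0) P)
    (n : ℕ) (σ : Fin n → ℤ) (hσ : Function.Injective σ) :
    Measure.map (fun ω (t : Fin n) => U (σ t) ω) P
      = Measure.pi (fun _ : Fin n => Measure.map (U 0) P) := by
  haveI : IsProbabilityMeasure (Measure.map (U 0) P) :=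
    Measure.isProbabilityMeasure_map (hU 0).aemeasurable
  refine (Measure.pi_eq ?_).symm
  intro s hs
  have hV : Measurable (fun ω (t : Fin n) => U (σ t) ω) :=
    measurable_pi_lambda _ fun t => hU _
  rw [Measure.map_apply hV (MeasurableSet.univ_pi hs)]
  classical
  set sets : ℤ → Set F' := fun z => if h : ∃ t, σ t = z then s h.choose else Set.univ with hsets
  have hmem : ∀ t : Fin n, sets (σ t) = s t := by
    intro t
    have h : ∃ t', σ t' = σ t := ⟨t, rfl⟩
    rw [hsets]
    simp only [dif_pos h]
    exact congrArg s (hσ h.choose_spec)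
  have hpre : (fun ω (t : Fin n) => U (σ t) ω) ⁻¹' (Set.pi Set.univ s)
      = ⋂ z ∈ Finset.image σ Finset.univ, U z ⁻¹' sets z := by
    ext ω
    simp only [Set.mem_preimage, Set.mem_pi, Set.mem_univ, forall_true_left, Set.mem_iInter,
      Finset.mem_image, Finset.mem_univ, true_and]
    constructor
    · rintro H z ⟨t, rfl⟩
      rw [hmem t]
      exact H t
    · intro H t
      have := H (σ t) ⟨t, rfl⟩
      rwa [hmem t] at this
  rw [hpre, hindep.measure_inter_preimage_eq_mul _ (fun z hz => ?_)]
  · rw [Finset.prod_image (fun x _ y _ hxy => hσ hxy)]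
    refine Finset.prod_congr rfl fun t _ => ?_
    rw [hmem t, ← Measure.map_apply (hU _) (hs t), hident (σ t)]
  · rcases Finset.mem_image.mp hz with ⟨t, _, rfl⟩
    rw [hmem t]
    exact hs t

lemma exp_shift_aux {Ω F F' : Type*} [MeasurableSpace Ω] [MeasurableSpace F] [MeasurableSpace F']
    (P : Measure Ω) [IsProbabilityMeasure P]
    (g : F → F' → F) (hg : Measurable (Function.uncurry g))
    (U : ℤ → Ω → F') (hU : ∀ i, Measurable (U i))
    (hindep : iIndepFun U P)
    (hident : ∀ i, Measure.map (U i) P = Measure.map (U 0) P)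
    (x0 : F) (f : F → ℝ) (hf : Measurable f)
    (X : ℕ → ℕ → Ω → F)
    (hX : ∀ i m ω, X i m ω = iterG g (i + m) x0 (fun j => U ((j : ℤ) - (m : ℤ)) ω))
    (i m : ℕ) :
    ∫ ω, f (X i m ω) ∂P = ∫ ω, f (X (i + m) 0 ω) ∂P := by
  have hΩ : Nonempty Ω := by
    by_contra hne
    rw [not_nonempty_iff] at hne
    have h1 : P Set.univ = 1 := measure_univ
    rw [Set.univ_eq_empty_iff.mpr hne, measure_empty] at h1
    exact zero_ne_one h1
  have hF' : Nonempty F' := ⟨U 0 (Classical.choice hΩ)⟩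
  set d : F' := Classical.choice hF' with hd
  set n := i + m with hn
  set Φ : (Fin n → F') → F :=
    fun y => iterG g n x0 (fun j => if hj : j < n then y ⟨j, hj⟩ else d) with hΦdef
  have hΦ : Measurable Φ := by
    apply (measurable_iterG_aux g hg n x0).comp
    apply measurable_pi_lambda
    intro j
    by_cases hj : j < n
    · simp only [dif_pos hj]
      exact measurable_pi_apply _
    · simp only [dif_neg hj]
      exact measurable_const
  set V : Ω → Fin n → F' := fun ω t => U ((t : ℤ) - (m : ℤ)) ω with hVdef
  set W : Ω → Fin n → F' := fun ω t => U ((t : ℤ)) ω with hWdef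
  have hV : Measurable V := measurable_pi_lambda _ fun t => hU _
  have hW : Measurable W := measurable_pi_lambda _ fun t => hU _
  have inj1 : Function.Injective (fun t : Fin n => (t : ℤ) - (m : ℤ)) := by
    intro a b hab
    have hab' : (a : ℤ) - (m : ℤ) = (b : ℤ) - (m : ℤ) := hab
    rw [sub_left_inj] at hab'
    exact Fin.ext (by exact_mod_cast hab')
  have inj2 : Function.Injective (fun t : Fin n => (t : ℤ)) := by
    intro a b hab
    have hab' : (a : ℤ) = (b : ℤ) := hab
    exact Fin.ext (by exact_mod_cast hab')
  have key1 : ∀ ω, f (X i m ω) = (f ∘ Φ) (V ω) := by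
    intro ω
    rw [hX i m ω]
    refine congrArg f (iterG_congr_aux g n x0 fun j hj => ?_)
    show U ((j : ℤ) - (m : ℤ)) ω = _
    rw [dif_pos hj]
  have key2 : ∀ ω, f (X (i + m) 0 ω) = (f ∘ Φ) (W ω) := by
    intro ω
    rw [hX (i + m) 0 ω]
    refine congrArg f (iterG_congr_aux g n x0 fun j hj => ?_)
    show U ((j : ℤ) - ((0 : ℕ) : ℤ)) ω = _
    rw [dif_pos hj]
    norm_num
    rfl
  calc ∫ ω, f (X i m ω) ∂P
      = ∫ ω, (f ∘ Φ) (V ω) ∂P :=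
        integral_congr_ae (Filter.Eventually.of_forall fun ω => key1 ω)
    _ = ∫ y, (f ∘ Φ) y ∂(Measure.map V P) :=
        (integral_map hV.aemeasurable (hf.comp hΦ).aestronglyMeasurable).symm
    _ = ∫ y, (f ∘ Φ) y ∂(Measure.map W P) := by
        rw [hVdef, hWdef, law_pi_aux P U hU hindep hident n _ inj1,
          law_pi_aux P U hU hindep hident n _ inj2]
    _ = ∫ ω, (f ∘ Φ) (W ω) ∂P :=
        integral_map hW.aemeasurable (hf.comp hΦ).aestronglyMeasurable
    _ = ∫ ω, f (X (i + m) 0 ω) ∂P :=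
        (integral_congr_ae (Filter.Eventually.of_forall fun ω => key2 ω)).symm

end Aux

theorem stmt10 {Ω F F' : Type*} [MeasurableSpace Ω] [MeasurableSpace F] [MeasurableSpace F']
    (P : Measure Ω) [IsProbabilityMeasure P]
    (g : F → F' → F) (hg : Measurable (Function.uncurry g))
    (U : ℤ → Ω → F') (hU : ∀ i, Measurable (U i))
    (hindep : iIndepFun U P)
    (hident : ∀ i, Measure.map (U i) P = Measure.map (U 0) P)
    (x0 : F) (f : F → ℝ) (hf : Measurable f)
    -- the coupled shifted chain: `X i m = X_{i,m} = G_{i+m}(X₀; U_{-m}, …, U_{i-1})`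
    (X : ℕ → ℕ → Ω → F)
    (hX : ∀ i m ω, X i m ω = iterG g (i + m) x0 (fun j => U ((j : ℤ) - (m : ℤ)) ω))
    (hL2 : ∀ i m, MemLp (fun ω => f (X i m ω)) 2 P)
    -- Assumption A1
    (ν : ℕ → ℝ) (hpos : ∀ i, 0 < ν i) (hdec : Antitone ν)
    (hsum : Summable (fun i : ℕ => Real.sqrt (ν i / ((i : ℝ) + 1))))
    (hA1 : ∀ i m, ∫ ω, (f (X i m ω) - f (X i 0 ω)) ^ 2 ∂P ≤ ν i)
    -- the tail sums ν̄ and the steady-state limit μ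
    (νbar : ℕ → ℝ)
    (hνbar : ∀ j, νbar j = ∑' i : ℕ, Real.sqrt (ν (j + i) / ((j : ℝ) + (i : ℝ) + 1)))
    (μ : ℝ) (hμ : Filter.Tendsto (fun h : ℕ => ∫ ω, f (X h 0 ω) ∂P) Filter.atTop (nhds μ)) :
    ∀ (h k : ℕ), 0 < k →
      |(∫ ω, (1 / (k : ℝ)) * ∑ i ∈ Finset.Ico h (h + k), f (X i 0 ω) ∂P) - μ|
        ≤ νbar (h / 2) / Real.sqrt k := by
  intro h k hk
  set a : ℕ → ℝ := fun n => ∫ ω, f (X n 0 ω) ∂P with ha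
  have hint : ∀ i m, Integrable (fun ω => f (X i m ω)) P :=
    fun i m => (hL2 i m).integrable one_le_two
  have hshift : ∀ i m, ∫ ω, f (X i m ω) ∂P = a (i + m) :=
    fun i m => exp_shift_aux P g hg U hU hindep hident x0 f hf X hX i m
  have hdiff : ∀ i m, |a (i + m) - a i| ≤ Real.sqrt (ν i) := by
    intro i m
    set q : Ω → ℝ := fun ω => f (X i m ω) - f (X i 0 ω) with hq
    have hqm : MemLp q 2 P := by
      have : q = (fun ω => f (X i m ω)) - (fun ω => f (X i 0 ω)) := rfl
      rw [this]
      exact (hL2 i m).sub (hL2 i 0)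
    have hvar := variance_nonneg q P
    rw [variance_eq_sub hqm] at hvar
    have hq2 : ∫ x, (q ^ 2) x ∂P ≤ ν i := by
      have := hA1 i m
      simpa [hq, Pi.pow_apply] using this
    have hqi : ∫ x, q x ∂P = a (i + m) - a i := by
      rw [hq]
      rw [integral_sub (hint i m) (hint i 0), hshift i m]
    have habs : (a (i + m) - a i) ^ 2 ≤ ν i := by
      rw [← hqi]
      linarith
    calc |a (i + m) - a i| = Real.sqrt ((a (i + m) - a i) ^ 2) :=
          (Real.sqrt_sq_eq_abs _).symm
      _ ≤ Real.sqrt (ν i) := Real.sqrt_le_sqrt habs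
  have hbias : ∀ i, |a i - μ| ≤ Real.sqrt (ν i) := by
    intro i
    have hlim : Filter.Tendsto (fun m : ℕ => a (i + m)) Filter.atTop (nhds μ) := by
      have h1 : Filter.Tendsto (fun m : ℕ => m + i) Filter.atTop Filter.atTop :=
        Filter.tendsto_add_atTop_nat i
      have h2 := hμ.comp h1
      simpa [Function.comp_def, add_comm] using h2
    have hcont : Filter.Tendsto (fun m : ℕ => |a (i + m) - a i|) Filter.atTop
        (nhds (|μ - a i|)) := (hlim.sub tendsto_const_nhds).abs
    rw [abs_sub_comm]
    exact le_of_tendsto hcont (Filter.Eventually.of_forall fun m => hdiff i m)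
  have hIavg : ∫ ω, (1 / (k:ℝ)) * ∑ i ∈ Finset.Ico h (h+k), f (X i 0 ω) ∂P
      = (1/(k:ℝ)) * ∑ i ∈ Finset.Ico h (h+k), a i := by
    rw [integral_const_mul]
    congr 1
    exact integral_finset_sum _ (fun i _ => hint i 0)
  have hcard : (Finset.Ico h (h+k)).card = k := by rw [Nat.card_Ico]; omega
  have hkpos : (0:ℝ) < (k:ℝ) := by exact_mod_cast hk
  have hsum1 : |(1/(k:ℝ)) * ∑ i ∈ Finset.Ico h (h+k), a i - μ|
      ≤ (1/(k:ℝ)) * ∑ i ∈ Finset.Ico h (h+k), Real.sqrt (ν i) := by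
    have e1 : (1/(k:ℝ)) * ∑ i ∈ Finset.Ico h (h+k), a i - μ
        = (1/(k:ℝ)) * (∑ i ∈ Finset.Ico h (h+k), (a i - μ)) := by
      rw [Finset.sum_sub_distrib, Finset.sum_const, hcard, nsmul_eq_mul]
      field_simp
    rw [e1, abs_mul, abs_of_nonneg (by positivity : (0:ℝ) ≤ 1/(k:ℝ))]
    apply mul_le_mul_of_nonneg_left _ (by positivity)
    exact (Finset.abs_sum_le_sum_abs _ _).trans (Finset.sum_le_sum fun i _ => hbias i)
  have hCS : ∑ i ∈ Finset.Ico h (h+k), Real.sqrt (ν i)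
      ≤ Real.sqrt k * Real.sqrt (∑ i ∈ Finset.Ico h (h+k), ν i) := by
    have h1 : (∑ i ∈ Finset.Ico h (h+k), Real.sqrt (ν i))^2
        ≤ (k:ℝ) * ∑ i ∈ Finset.Ico h (h+k), ν i := by
      have h2 := sq_sum_le_card_mul_sum_sq (s := Finset.Ico h (h+k))
        (f := fun i => Real.sqrt (ν i))
      rw [hcard] at h2
      calc (∑ i ∈ Finset.Ico h (h+k), Real.sqrt (ν i))^2
          ≤ (k:ℝ) * ∑ i ∈ Finset.Ico h (h+k), Real.sqrt (ν i) ^ 2 := h2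
        _ = (k:ℝ) * ∑ i ∈ Finset.Ico h (h+k), ν i := by
            congr 1
            exact Finset.sum_congr rfl fun i _ => Real.sq_sqrt (hpos i).le
    calc ∑ i ∈ Finset.Ico h (h+k), Real.sqrt (ν i)
        = Real.sqrt ((∑ i ∈ Finset.Ico h (h+k), Real.sqrt (ν i))^2) :=
          (Real.sqrt_sq (Finset.sum_nonneg fun i _ => Real.sqrt_nonneg _)).symm
      _ ≤ Real.sqrt ((k:ℝ) * ∑ i ∈ Finset.Ico h (h+k), ν i) := Real.sqrt_le_sqrt h1
      _ = Real.sqrt k * Real.sqrt (∑ i ∈ Finset.Ico h (h+k), ν i) :=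
          Real.sqrt_mul (by positivity) _
  have hνnn : 0 ≤ νbar (h/2) := by
    rw [hνbar (h/2)]
    exact tsum_nonneg fun i => Real.sqrt_nonneg _
  have htail : ∑ i ∈ Finset.Ico h (h+k), ν i ≤ (νbar (h/2))^2 := by
    have h1 : ∑ i ∈ Finset.Ico h (h+k), ν i ≤ ∑ i ∈ Finset.Ico (2*(h/2)) (h+k), ν i :=
      Finset.sum_le_sum_of_subset_of_nonneg (Finset.Ico_subset_Ico (by omega) le_rfl)
        (fun i _ _ => (hpos i).le)
    have h2 := tail_sum_aux ν hpos hdec (h/2) (h+k)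
    have h3 := partial_le_tail_aux ν hsum (h/2) (h+k)
    rw [← hνbar (h/2)] at h3
    have h4 : (0:ℝ) ≤ ∑ i ∈ Finset.Ico (h/2) (h+k), Real.sqrt (ν i / (i+1)) :=
      Finset.sum_nonneg fun i _ => Real.sqrt_nonneg _
    have h5 : (∑ i ∈ Finset.Ico (h/2) (h+k), Real.sqrt (ν i / (i+1)))^2 ≤ (νbar (h/2))^2 :=
      pow_le_pow_left₀ h4 h3 2
    linarith
  have hsqν : Real.sqrt (∑ i ∈ Finset.Ico h (h+k), ν i) ≤ νbar (h/2) := by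
    calc Real.sqrt (∑ i ∈ Finset.Ico h (h+k), ν i)
        ≤ Real.sqrt ((νbar (h/2))^2) := Real.sqrt_le_sqrt htail
      _ = |νbar (h/2)| := Real.sqrt_sq_eq_abs _
      _ = νbar (h/2) := abs_of_nonneg hνnn
  rw [hIavg]
  have hsk : (0:ℝ) < Real.sqrt k := Real.sqrt_pos.mpr hkpos
  calc |(1/(k:ℝ)) * ∑ i ∈ Finset.Ico h (h+k), a i - μ|
      ≤ (1/(k:ℝ)) * ∑ i ∈ Finset.Ico h (h+k), Real.sqrt (ν i) := hsum1
    _ ≤ (1/(k:ℝ)) * (Real.sqrt k * Real.sqrt (∑ i ∈ Finset.Ico h (h+k), ν i)) :=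
        mul_le_mul_of_nonneg_left hCS (by positivity)
    _ ≤ (1/(k:ℝ)) * (Real.sqrt k * νbar (h/2)) :=
        mul_le_mul_of_nonneg_left
          (mul_le_mul_of_nonneg_left hsqν (Real.sqrt_nonneg _)) (by positivity)
    _ = νbar (h/2) / Real.sqrt k := by
        have hk2 : Real.sqrt k * Real.sqrt k = (k:ℝ) := Real.mul_self_sqrt (by positivity)
        field_simp
        nlinarith [hk2]
end

section
/- Let (Y_l)_{l≥0} be square-integrable real random variables with E[Y_l] → μ_Y, let (p_l)_{l≥0} be a probability distribution on ℕ with p_l > 0 for all l, and let N be independent of (Y_l) with P(N = l) = p_l. Set Y_{-1} = 0 and Z := (Y_N − Y_{N-1})/p_N. If ∑_{l=0}^∞ E[(Y_l − Y_{l-1})²]/p_l < ∞, then Z is square-integrable, E[Z] = μ_Y, and E[Z²] = ∑_{l=0}^∞ E[(Y_l − Y_{l-1})²]/p_l. -/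
open MeasureTheory ProbabilityTheory

private lemma aux_indep {Ω : Type*} [MeasurableSpace Ω] (P : Measure Ω) [IsProbabilityMeasure P]
    (Y : ℕ → Ω → ℝ)
    (p : ℕ → ℝ) (hp : ∀ l, 0 < p l)
    (N : Ω → ℕ) (hN : Measurable N)
    (hNdist : ∀ l : ℕ, P {ω | N ω = l} = ENNReal.ofReal (p l))
    (hNindep : IndepFun N (fun ω (l : ℕ) => Y l ω) P)
    (D : ℕ → Ω → ℝ) (hD : ∀ l ω, D l ω = Y l ω - (if l = 0 then 0 else Y (l - 1) ω))
    (l : ℕ) (g : ℝ → ℝ) (hg : Measurable g)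
    (hint : Integrable (fun ω => g (D l ω)) P) :
    ∫ ω, ({ω | N ω = l} : Set Ω).indicator (fun ω => g (D l ω)) ω ∂P
      = p l * ∫ ω, g (D l ω) ∂P := by
  classical
  have hAmeas : MeasurableSet {ω | N ω = l} := hN (measurableSet_singleton l)
  set φ : ℕ → ℝ := fun n => if n = l then 1 else 0 with hφdef
  have hφ : Measurable φ := measurable_of_countable φ
  set ψ : (ℕ → ℝ) → ℝ := fun v => g (v l - (if l = 0 then 0 else v (l - 1))) with hψdef
  have hψ : Measurable ψ := by
    apply hg.comp
    apply (measurable_pi_apply l).sub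
    rcases Nat.eq_zero_or_pos l with h | h
    · simp only [h, if_true]; exact measurable_const
    · simp only [Nat.pos_iff_ne_zero.mp h, if_false]; exact measurable_pi_apply _
  have hindep := hNindep.comp hφ hψ
  have hcomp : (ψ ∘ fun ω (l : ℕ) => Y l ω) = fun ω => g (D l ω) := by
    funext ω; simp only [Function.comp, hψdef]; rw [hD l ω]
  rw [hcomp] at hindep
  have hφN : (φ ∘ N) = ({ω | N ω = l} : Set Ω).indicator (fun _ => (1:ℝ)) := by
    funext ω
    by_cases h : N ω = l <;> simp [Function.comp, hφdef, Set.indicator_apply, h]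
  have hφint : Integrable (φ ∘ N) P := by
    rw [hφN]; exact (integrable_const (1:ℝ)).indicator hAmeas
  have hmul := hindep.integral_mul_eq_mul_integral hφint.1 hint.1
  have hφval : ∫ ω, (φ ∘ N) ω ∂P = p l := by
    rw [hφN, integral_indicator_const (1:ℝ) hAmeas]
    simp [measureReal_def, hNdist l, ENNReal.toReal_ofReal (hp l).le]
  have hprod : ((φ ∘ N) * fun ω => g (D l ω))
      = ({ω | N ω = l} : Set Ω).indicator (fun ω => g (D l ω)) := by
    funext ω
    by_cases h : N ω = l <;> simp [hφdef, Set.indicator_apply, h, Function.comp]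
  rw [hprod] at hmul
  rw [← hφval]
  exact hmul

theorem stmt14 {Ω : Type*} [MeasurableSpace Ω] (P : Measure Ω) [IsProbabilityMeasure P]
    (Y : ℕ → Ω → ℝ) (hY : ∀ l, MemLp (Y l) 2 P)
    (μY : ℝ) (hlim : Filter.Tendsto (fun l : ℕ => ∫ ω, Y l ω ∂P) Filter.atTop (nhds μY))
    (p : ℕ → ℝ) (hp : ∀ l, 0 < p l) (hp1 : ∑' l : ℕ, p l = 1)
    (N : Ω → ℕ) (hN : Measurable N)
    (hNdist : ∀ l : ℕ, P {ω | N ω = l} = ENNReal.ofReal (p l))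
    (hNindep : IndepFun N (fun ω (l : ℕ) => Y l ω) P)
    -- differences `D l = Y l − Y (l−1)`, with the convention `Y (−1) = 0`
    (D : ℕ → Ω → ℝ) (hD : ∀ l ω, D l ω = Y l ω - (if l = 0 then 0 else Y (l - 1) ω))
    (Z : Ω → ℝ) (hZ : ∀ ω, Z ω = D (N ω) ω / p (N ω))
    (hfin : Summable (fun l : ℕ => (∫ ω, (D l ω) ^ 2 ∂P) / p l)) :
    MemLp Z 2 P ∧ (∫ ω, Z ω ∂P) = μY ∧
      (∫ ω, (Z ω) ^ 2 ∂P) = ∑' l : ℕ, (∫ ω, (D l ω) ^ 2 ∂P) / p l := by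
  classical
  have hAmeas : ∀ l : ℕ, MeasurableSet {ω | N ω = l} :=
    fun l => hN (measurableSet_singleton l)
  have hpsum : Summable p := by
    by_contra h
    rw [tsum_eq_zero_of_not_summable h] at hp1
    norm_num at hp1
  have hDfun : ∀ l, D l = fun ω => Y l ω - (if l = 0 then 0 else Y (l - 1) ω) :=
    fun l => funext (hD l)
  have hDmem : ∀ l, MemLp (D l) 2 P := by
    intro l
    rw [hDfun l]
    rcases Nat.eq_zero_or_pos l with h | h
    · simpa [h] using hY 0
    · have h0 : l ≠ 0 := Nat.pos_iff_ne_zero.mp h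
      simp only [h0, if_false]; exact (hY l).sub (hY (l - 1))
  have hDint : ∀ l, Integrable (D l) P := fun l => (hDmem l).integrable one_le_two
  -- the three independence identities
  have keyD : ∀ l, ∫ ω, ({ω | N ω = l} : Set Ω).indicator (D l) ω ∂P
      = p l * ∫ ω, D l ω ∂P := by
    intro l
    simpa using aux_indep P Y p hp N hN hNdist hNindep D hD l id measurable_id (hDint l)
  have keyAbs : ∀ l, ∫ ω, ({ω | N ω = l} : Set Ω).indicator (fun ω => |D l ω|) ω ∂P
      = p l * ∫ ω, |D l ω| ∂P := by
    intro l
    simpa using aux_indep P Y p hp N hN hNdist hNindep D hD l (fun x => |x|)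
      measurable_abs (hDint l).abs
  have keySq : ∀ l, ∫ ω, ({ω | N ω = l} : Set Ω).indicator (fun ω => (D l ω) ^ 2) ω ∂P
      = p l * ∫ ω, (D l ω) ^ 2 ∂P := by
    intro l
    simpa using aux_indep P Y p hp N hN hNdist hNindep D hD l (fun x => x ^ 2)
      (measurable_id.pow_const 2) (hDmem l).integrable_sq
  -- the summands
  set f1 : ℕ → Ω → ℝ := fun l => ({ω | N ω = l} : Set Ω).indicator (fun ω => D l ω / p l)
    with hf1def
  set f2 : ℕ → Ω → ℝ := fun l => ({ω | N ω = l} : Set Ω).indicator (fun ω => (D l ω / p l) ^ 2)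
    with hf2def
  have hindiv : ∀ (s : Set Ω) (u : Ω → ℝ) (c : ℝ),
      s.indicator (fun ω => u ω / c) = fun ω => s.indicator u ω / c := by
    intro s u c; funext ω; by_cases h : ω ∈ s <;> simp [h]
  have hf1int : ∀ l, Integrable (f1 l) P := by
    intro l
    exact ((hDint l).div_const (p l)).indicator (hAmeas l)
  have hf2int : ∀ l, Integrable (f2 l) P := by
    intro l
    refine Integrable.indicator ?_ (hAmeas l)
    have : (fun ω => (D l ω / p l) ^ 2) = fun ω => (D l ω) ^ 2 / (p l) ^ 2 := by
      funext ω; rw [div_pow]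
    rw [this]
    exact (hDmem l).integrable_sq.div_const _
  have hf1meas : ∀ l, AEStronglyMeasurable (f1 l) P := fun l => (hf1int l).1
  have hf2meas : ∀ l, AEStronglyMeasurable (f2 l) P := fun l => (hf2int l).1
  -- values of the integrals of f1, f2
  have hIf1 : ∀ l, ∫ ω, f1 l ω ∂P = ∫ ω, D l ω ∂P := by
    intro l
    simp only [hf1def]
    rw [hindiv, integral_div, keyD l]
    exact mul_div_cancel_left₀ _ (hp l).ne'
  have hIf2 : ∀ l, ∫ ω, f2 l ω ∂P = (∫ ω, (D l ω) ^ 2 ∂P) / p l := by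
    intro l
    have h2 : ({ω | N ω = l} : Set Ω).indicator (fun ω => (D l ω / p l) ^ 2)
        = fun ω => ({ω | N ω = l} : Set Ω).indicator (fun ω => (D l ω) ^ 2) ω / (p l) ^ 2 := by
      funext ω; by_cases h : ω ∈ ({ω | N ω = l} : Set Ω) <;> simp [h, div_pow]
    simp only [hf2def]
    rw [h2, integral_div, keySq l]
    have hpne : p l ≠ 0 := (hp l).ne'
    field_simp
  -- norms of f1
  have habsf1 : ∀ l ω, ‖f1 l ω‖
      = ({ω | N ω = l} : Set Ω).indicator (fun ω => |D l ω| / p l) ω := by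
    intro l ω
    by_cases h : ω ∈ ({ω | N ω = l} : Set Ω)
    · simp [hf1def, h, Real.norm_eq_abs, abs_div, abs_of_pos (hp l)]
    · simp [hf1def, h]
  have hInormf1 : ∀ l, ∫ ω, ‖f1 l ω‖ ∂P = ∫ ω, |D l ω| ∂P := by
    intro l
    rw [integral_congr_ae (Filter.Eventually.of_forall (habsf1 l)), hindiv, integral_div,
      keyAbs l]
    exact mul_div_cancel_left₀ _ (hp l).ne'
  -- summability of l ↦ ∫ |D l|
  have habs_le : ∀ l, ∫ ω, |D l ω| ∂P ≤ ((∫ ω, (D l ω) ^ 2 ∂P) / p l + p l) / 2 := by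
    intro l
    have hint2 : Integrable (fun ω => ((D l ω) ^ 2 / p l + p l) / 2) P :=
      (((hDmem l).integrable_sq.div_const _).add (integrable_const _)).div_const _
    have hmono : ∀ ω, |D l ω| ≤ ((D l ω) ^ 2 / p l + p l) / 2 := by
      intro ω
      have h2 := hp l
      have hkey : |D l ω| * (2 * p l) ≤ (D l ω) ^ 2 + (p l) ^ 2 := by
        nlinarith [sq_nonneg (|D l ω| - p l), sq_abs (D l ω)]
      have heq : ((D l ω) ^ 2 / p l + p l) / 2 = ((D l ω) ^ 2 + (p l) ^ 2) / (2 * p l) := by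
        field_simp
      rw [heq, le_div_iff₀ (by positivity)]
      exact hkey
    calc ∫ ω, |D l ω| ∂P ≤ ∫ ω, ((D l ω) ^ 2 / p l + p l) / 2 ∂P :=
          integral_mono (hDint l).abs hint2 hmono
      _ = ((∫ ω, (D l ω) ^ 2 ∂P) / p l + p l) / 2 := by
          rw [integral_div, integral_add ((hDmem l).integrable_sq.div_const _)
            (integrable_const _), integral_div, integral_const]
          simp
  have habs_nonneg : ∀ l, 0 ≤ ∫ ω, |D l ω| ∂P :=
    fun l => integral_nonneg fun ω => abs_nonneg _
  have hsummAbs : Summable (fun l => ∫ ω, |D l ω| ∂P) :=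
    Summable.of_nonneg_of_le habs_nonneg habs_le ((hfin.add hpsum).div_const 2)
  -- lintegral bound for f1
  have hlint1 : ∀ l, ∫⁻ ω, ‖f1 l ω‖ₑ ∂P = ENNReal.ofReal (∫ ω, |D l ω| ∂P) := by
    intro l
    rw [← ofReal_integral_norm_eq_lintegral_enorm (hf1int l), hInormf1 l]
  have hf1' : ∑' l, ∫⁻ ω, ‖f1 l ω‖ₑ ∂P ≠ ⊤ := by
    simp only [hlint1]
    rw [← ENNReal.ofReal_tsum_of_nonneg habs_nonneg hsummAbs]
    exact ENNReal.ofReal_ne_top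
  -- pointwise tsum representations
  have hZ1 : ∀ ω, Z ω = ∑' l, f1 l ω := by
    intro ω
    rw [hZ ω]
    symm
    rw [tsum_eq_single (N ω) (by
      intro l hl
      simp only [hf1def, Set.indicator_apply, Set.mem_setOf_eq]
      rw [if_neg (by intro h; exact hl h.symm)])]
    simp [hf1def, Set.indicator_apply]
  have hZ2 : ∀ ω, (Z ω) ^ 2 = ∑' l, f2 l ω := by
    intro ω
    rw [hZ ω]
    symm
    rw [tsum_eq_single (N ω) (by
      intro l hl
      simp only [hf2def, Set.indicator_apply, Set.mem_setOf_eq]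
      rw [if_neg (by intro h; exact hl h.symm)])]
    simp [hf2def, Set.indicator_apply]
  -- E[Z] = ∑' ∫ D l
  have EZ : ∫ ω, Z ω ∂P = ∑' l, ∫ ω, D l ω ∂P := by
    calc ∫ ω, Z ω ∂P = ∫ ω, ∑' l, f1 l ω ∂P := by
          exact integral_congr_ae (Filter.Eventually.of_forall hZ1)
      _ = ∑' l, ∫ ω, f1 l ω ∂P := integral_tsum hf1meas hf1'
      _ = ∑' l, ∫ ω, D l ω ∂P := by exact tsum_congr hIf1
  -- telescoping
  have hsumd : Summable (fun l => ∫ ω, D l ω ∂P) := by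
    refine Summable.of_norm_bounded hsummAbs (fun l => ?_)
    rw [Real.norm_eq_abs]
    calc |∫ ω, D l ω ∂P| ≤ ∫ ω, |D l ω| ∂P := by
          simpa [Real.norm_eq_abs] using norm_integral_le_integral_norm (μ := P) (D l)
      _ ≤ _ := le_refl _
  have htel : ∀ n, ∑ i ∈ Finset.range (n + 1), ∫ ω, D i ω ∂P = ∫ ω, Y n ω ∂P := by
    intro n
    induction n with
    | zero =>
      simp only [zero_add, Finset.sum_range_one]
      rw [hDfun 0]; simp
    | succ n ih =>
      rw [Finset.sum_range_succ, ih]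
      have hstep : ∫ ω, D (n + 1) ω ∂P = ∫ ω, Y (n + 1) ω ∂P - ∫ ω, Y n ω ∂P := by
        rw [hDfun (n + 1)]
        simp only [Nat.succ_ne_zero, if_false, Nat.add_sub_cancel]
        exact integral_sub ((hY (n + 1)).integrable one_le_two) ((hY n).integrable one_le_two)
      rw [hstep]; ring
  have hEZval : (∑' l, ∫ ω, D l ω ∂P) = μY := by
    have h1 := hsumd.hasSum.tendsto_sum_nat
    have h2 := h1.comp (Filter.tendsto_add_atTop_nat 1)
    have h3 : ((fun n => ∑ i ∈ Finset.range n, ∫ ω, D i ω ∂P) ∘ fun n => n + 1)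
        = fun n => ∫ ω, Y n ω ∂P := by
      funext n
      simp only [Function.comp]
      exact htel n
    rw [h3] at h2
    exact tendsto_nhds_unique h2 hlim
  -- second moment
  have hf2_nonneg : ∀ l ω, 0 ≤ f2 l ω := by
    intro l ω
    by_cases h : ω ∈ ({ω | N ω = l} : Set Ω) <;> simp [hf2def, h, sq_nonneg]
  have hI2_nonneg : ∀ l, 0 ≤ (∫ ω, (D l ω) ^ 2 ∂P) / p l :=
    fun l => div_nonneg (integral_nonneg fun ω => sq_nonneg _) (hp l).le
  have hlint2 : ∀ l, ∫⁻ ω, ‖f2 l ω‖ₑ ∂P = ENNReal.ofReal ((∫ ω, (D l ω) ^ 2 ∂P) / p l) := by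
    intro l
    rw [← ofReal_integral_norm_eq_lintegral_enorm (hf2int l)]
    congr 1
    rw [← hIf2 l]
    exact integral_congr_ae (Filter.Eventually.of_forall fun ω =>
      Real.norm_of_nonneg (hf2_nonneg l ω))
  have hf2' : ∑' l, ∫⁻ ω, ‖f2 l ω‖ₑ ∂P ≠ ⊤ := by
    simp only [hlint2]
    rw [← ENNReal.ofReal_tsum_of_nonneg hI2_nonneg hfin]
    exact ENNReal.ofReal_ne_top
  have EZ2 : ∫ ω, (Z ω) ^ 2 ∂P = ∑' l, (∫ ω, (D l ω) ^ 2 ∂P) / p l := by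
    calc ∫ ω, (Z ω) ^ 2 ∂P = ∫ ω, ∑' l, f2 l ω ∂P :=
          integral_congr_ae (Filter.Eventually.of_forall hZ2)
      _ = ∑' l, ∫ ω, f2 l ω ∂P := integral_tsum hf2meas hf2'
      _ = ∑' l, (∫ ω, (D l ω) ^ 2 ∂P) / p l := tsum_congr hIf2
  -- measurability of Z
  have hZmeas : AEStronglyMeasurable Z P := by
    set D' : ℕ → Ω → ℝ := fun l => ((hDmem l).aestronglyMeasurable).mk (D l) with hD'def
    have hD'meas : ∀ l, Measurable (D' l) :=
      fun l => ((hDmem l).aestronglyMeasurable).stronglyMeasurable_mk.measurable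
    have hG : Measurable (fun q : Ω × ℕ => D' q.2 q.1 / p q.2) :=
      measurable_from_prod_countable_left fun l => (hD'meas l).div_const (p l)
    refine ⟨fun ω => D' (N ω) ω / p (N ω),
      (hG.comp (measurable_id.prodMk hN)).stronglyMeasurable, ?_⟩
    have hae : ∀ᵐ ω ∂P, ∀ l, D l ω = D' l ω :=
      ae_all_iff.2 fun l => ((hDmem l).aestronglyMeasurable).ae_eq_mk
    filter_upwards [hae] with ω hω
    rw [hZ ω, hω (N ω)]
  -- integrability of Z^2
  have hZsq_int : Integrable (fun ω => (Z ω) ^ 2) P := by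
    refine ⟨(continuous_pow 2).comp_aestronglyMeasurable hZmeas, ?_⟩
    have hpt : ∀ ω, (‖(Z ω) ^ 2‖₊ : ENNReal) = ∑' l, (‖f2 l ω‖₊ : ENNReal) := by
      intro ω
      rw [tsum_eq_single (N ω) (by
        intro l hl
        simp only [hf2def, Set.indicator_apply, Set.mem_setOf_eq]
        rw [if_neg (by intro h; exact hl h.symm)]
        simp)]
      congr 1
      rw [hZ ω]
      simp [hf2def, Set.indicator_apply]
    show (∫⁻ ω, (‖(Z ω) ^ 2‖₊ : ENNReal) ∂P) < ⊤
    calc ∫⁻ ω, (‖(Z ω) ^ 2‖₊ : ENNReal) ∂P = ∫⁻ ω, ∑' l, (‖f2 l ω‖₊ : ENNReal) ∂P :=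
          lintegral_congr hpt
      _ = ∑' l, ∫⁻ ω, ‖f2 l ω‖₊ ∂P := lintegral_tsum fun l => (hf2meas l).enorm
      _ < ⊤ := lt_top_iff_ne_top.2 hf2'
  refine ⟨(memLp_two_iff_integrable_sq hZmeas).2 hZsq_int, ?_, EZ2⟩
  rw [EZ, hEZval]
end
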